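/- arXiv:1111.6337 — 9 statements merged into one kernel-verified Lean document; each statement's English description precedes it below -/
import Mathlib

section
/- Under the improved-FTRL updates with step size η ∈ (0,1], the regret satisfies ∑_{t=1}^T c_t(x_t) − min_{x∈𝒫} ∑_{t=1}^T c_t(x) ≤ L/(2η) + (η/(2L))·EVAR, where EVAR = ∑_{t=0}^{T−1} ‖∇c_{t+1}(z_t) − ∇c_t(z_t)‖₂². -/
open Finset
open scoped RealInnerProductSpace

abbrev Euc (d : ℕ) := EuclideanSpace ℝ (Fin d)

lemma posA {A B : ℝ} (h : ∀ θ : ℝ, 0 < θ → θ ≤ 1 → 0 ≤ θ*A + θ^2*B) : 0 ≤ A := by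
  by_contra hA
  push_neg at hA
  have hB : 0 < B := by nlinarith [h 1 one_pos le_rfl]
  set θ := min 1 (-A/(2*B)) with hθ
  have hθ0 : 0 < θ := lt_min one_pos (div_pos (by linarith) (by linarith))
  have hθ1 : θ ≤ 1 := min_le_left _ _
  have hθ2 : θ * (2*B) ≤ -A :=
    (le_div_iff₀ (by linarith : (0:ℝ) < 2*B)).mp (min_le_right _ _)
  have := h θ hθ0 hθ1
  nlinarith [mul_pos hθ0 (neg_pos.mpr hA)]

lemma quad_strong {d : ℕ} {P : Set (Euc d)} (hP : Convex ℝ P) {K : ℝ} (hK : 0 < K)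
    (a b w : Euc d) (hw : w ∈ P)
    (hmin : ∀ u ∈ P, ⟪a, w⟫ + K/2 * ‖w - b‖^2 ≤ ⟪a, u⟫ + K/2 * ‖u - b‖^2) :
    ∀ u ∈ P, ⟪a, w⟫ + K/2*‖w-b‖^2 + K/2*‖u-w‖^2 ≤ ⟪a, u⟫ + K/2*‖u-b‖^2 := by
  intro u hu
  obtain ⟨v, hv⟩ : ∃ v, v = u - w := ⟨_, rfl⟩
  have hexp : ∀ θ : ℝ, ‖(w - b) + θ • v‖^2 = ‖w - b‖^2 + θ * (2 * ⟪w - b, v⟫) + θ^2 * ‖v‖^2 := by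
    intro θ
    rw [norm_add_sq_real, real_inner_smul_right, norm_smul]
    simp [mul_pow]
    ring
  have key : 0 ≤ ⟪a, v⟫ + K * ⟪w - b, v⟫ := by
    apply posA (B := K/2 * ‖v‖^2)
    intro θ hθ0 hθ1
    have hmem : w + θ • v ∈ P := by
      have := hP hw hu (by linarith : (0:ℝ) ≤ 1 - θ) hθ0.le (by ring)
      convert this using 1
      rw [hv]
      module
    have h2 := hmin _ hmem
    have h3 : w + θ • v - b = (w - b) + θ • v := by module
    rw [h3, hexp, inner_add_right, real_inner_smul_right] at h2
    nlinarith
  have h5 : u - b = (w - b) + (1:ℝ) • v := by rw [hv]; module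
  have h7 : (⟪a, u⟫:ℝ) = ⟪a, w⟫ + ⟪a, v⟫ := by
    rw [← inner_add_right]
    congr 1
    rw [hv]; module
  rw [← hv, h5, hexp, h7]
  nlinarith [key]

lemma hasDerivAt_line {d : ℕ} (f : Euc d → ℝ) (hf : Differentiable ℝ f) (w v : Euc d) (s : ℝ) :
    HasDerivAt (fun r : ℝ => f (w + r • v)) ⟪gradient f (w + s • v), v⟫ s := by
  have h1 : HasDerivAt (fun r : ℝ => w + r • v) v s := by
    simpa using ((hasDerivAt_id s).smul_const v).const_add w
  have h2 := hasGradientAt_iff_hasFDerivAt.mp (hf (w + s • v)).hasGradientAt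
  simpa [Function.comp_def] using h2.comp_hasDerivAt s h1

lemma convex_grad_ineq {d : ℕ} (f : Euc d → ℝ) (hconv : ConvexOn ℝ Set.univ f)
    (hf : Differentiable ℝ f) (p q : Euc d) :
    f p + ⟪gradient f p, q - p⟫ ≤ f q := by
  have hφ : ConvexOn ℝ Set.univ (fun r : ℝ => f (p + r • (q - p))) := by
    have h := hconv.comp_affineMap (AffineMap.lineMap p q)
    have heq : (fun r : ℝ => f (p + r • (q - p))) = f ∘ (AffineMap.lineMap p q) := by
      funext r
      have hl : (AffineMap.lineMap p q) r = p + r • (q - p) := by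
        simp only [AffineMap.lineMap_apply, vsub_eq_sub, vadd_eq_add]
        module
      rw [Function.comp_apply, hl]
    rw [heq]
    simpa using h
  have hd := hasDerivAt_line f hf p (q - p) 0
  rw [zero_smul, add_zero] at hd
  have h := hφ.le_slope_of_hasDerivAt (Set.mem_univ (0:ℝ)) (Set.mem_univ (1:ℝ)) one_pos hd
  rw [slope_def_field] at h
  have e1 : p + (1:ℝ) • (q - p) = q := by module
  have e0 : p + (0:ℝ) • (q - p) = p := by module
  rw [e1, e0, show ((1:ℝ) - 0) = 1 by norm_num, div_one] at h
  linarith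

lemma descent_lemma {d : ℕ} (f : Euc d → ℝ) (hf : Differentiable ℝ f)
    {P : Set (Euc d)} (hP : Convex ℝ P) {L : ℝ} (hL : 0 ≤ L)
    (hlip : ∀ u ∈ P, ∀ v ∈ P, ‖gradient f u - gradient f v‖ ≤ L * ‖u - v‖)
    (p q : Euc d) (hp : p ∈ P) (hq : q ∈ P) :
    f q ≤ f p + ⟪gradient f p, q - p⟫ + L/2 * ‖q - p‖^2 := by
  obtain ⟨v, hv⟩ : ∃ v, v = q - p := ⟨_, rfl⟩
  set ψ : ℝ → ℝ := fun s => f (p + s • v) - s * ⟪gradient f p, v⟫ - L * s^2/2 * ‖v‖^2 with hψ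
  have hψd : ∀ s : ℝ, HasDerivAt ψ
      (⟪gradient f (p + s • v), v⟫ - ⟪gradient f p, v⟫ - L * s * ‖v‖^2) s := by
    intro s
    have h1 := hasDerivAt_line f hf p v s
    have h2 : HasDerivAt (fun s : ℝ => s * ⟪gradient f p, v⟫) ⟪gradient f p, v⟫ s := by
      simpa using (hasDerivAt_id s).mul_const _
    have h3 : HasDerivAt (fun s : ℝ => L * s^2/2 * ‖v‖^2) (L * s * ‖v‖^2) s := by
      have h4 : HasDerivAt (fun s : ℝ => s^2) (2*s) s := by simpa using hasDerivAt_pow 2 s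
      have h5 := ((h4.const_mul L).div_const 2).mul_const (‖v‖^2)
      rw [show L * s * ‖v‖^2 = L * (2 * s) / 2 * ‖v‖^2 by ring]
      exact h5
    exact (h1.sub h2).sub h3
  have hmono : AntitoneOn ψ (Set.Icc 0 1) := by
    apply antitoneOn_of_deriv_nonpos (convex_Icc 0 1)
    · exact Continuous.continuousOn (continuous_iff_continuousAt.mpr
        (fun s => (hψd s).differentiableAt.continuousAt))
    · intro s hs
      exact (hψd s).differentiableAt.differentiableWithinAt
    · intro s hs
      rw [interior_Icc] at hs
      rw [(hψd s).deriv]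
      have hmem : p + s • v ∈ P := by
        have h6 := hP hp hq (by linarith [hs.2] : (0:ℝ) ≤ 1 - s) (le_of_lt hs.1) (by ring)
        convert h6 using 1
        rw [hv]
        module
      have h4 : ⟪gradient f (p + s • v) - gradient f p, v⟫ ≤ L * s * ‖v‖^2 := by
        calc ⟪gradient f (p + s • v) - gradient f p, v⟫
            ≤ ‖gradient f (p + s • v) - gradient f p‖ * ‖v‖ := real_inner_le_norm _ _
          _ ≤ (L * ‖(p + s • v) - p‖) * ‖v‖ :=
              mul_le_mul_of_nonneg_right (hlip _ hmem _ hp) (norm_nonneg _)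
          _ = L * s * ‖v‖^2 := by
              rw [show p + s • v - p = s • v by module, norm_smul]
              simp only [Real.norm_eq_abs, abs_of_nonneg (le_of_lt hs.1)]
              ring
      rw [inner_sub_left] at h4
      linarith
  have hkey := hmono (Set.mem_Icc.mpr ⟨le_refl 0, zero_le_one⟩)
    (Set.mem_Icc.mpr ⟨zero_le_one, le_refl 1⟩) zero_le_one
  have hψ0 : ψ 0 = f p := by simp [hψ]
  have hψ1 : ψ 1 = f q - ⟪gradient f p, v⟫ - L/2 * ‖v‖^2 := by
    have e1 : p + (1:ℝ) • v = q := by rw [hv]; module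
    simp only [hψ, e1, one_pow, one_mul]
    ring
  rw [hψ0, hψ1] at hkey
  rw [← hv]
  linarith

lemma ftrl_core {d T : ℕ} {K : ℝ} (hK : 0 < K) {P : Set (Euc d)}
    (g m w zz : ℕ → Euc d) (G : ℕ → Euc d) (hG : ∀ t, G t = ∑ i ∈ range t, g i)
    (xs : Euc d) (hxs : xs ∈ P) (hxsn : ‖xs‖ ≤ 1)
    (hzz0 : zz 0 = 0)
    (hzzmem : ∀ t, t ≤ T → zz t ∈ P)
    (hzstrong : ∀ t, t ≤ T → ∀ u ∈ P,
      ⟪G t, zz t⟫ + K/2*‖zz t - 0‖^2 + K/2*‖u - zz t‖^2 ≤ ⟪G t, u⟫ + K/2*‖u - 0‖^2)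
    (hwstrong : ∀ i, i < T → ∀ u ∈ P,
      ⟪m i, w i⟫ + K/2*‖w i - zz i‖^2 + K/2*‖u - w i‖^2 ≤ ⟪m i, u⟫ + K/2*‖u - zz i‖^2)
    (a b : ℕ → ℝ)
    (hcost : ∀ i, i < T → a i ≤ b i + ⟪g i, w i - xs⟫ + K/2 * ‖w i - zz i‖^2) :
    (∑ i ∈ range T, a i) - (∑ i ∈ range T, b i)
      ≤ K/2 + 1/(2*K) * ∑ i ∈ range T, ‖g i - m i‖^2 := by
  set Φ : ℕ → ℝ := fun t => ⟪G t, zz t⟫ + K/2 * ‖zz t‖^2 with hΦ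
  have perstep : ∀ i ∈ range T,
      a i - b i - (Φ (i+1) - Φ i) + ⟪g i, xs⟫ ≤ 1/(2*K) * ‖g i - m i‖^2 := by
    intro i hi
    rw [mem_range] at hi
    have A1 := hzstrong i (le_of_lt hi) (zz (i+1)) (hzzmem (i+1) hi)
    simp only [sub_zero] at A1
    have A2 := hwstrong i hi (zz (i+1)) (hzzmem (i+1) hi)
    have A3 := hcost i hi
    have Young : ⟪g i - m i, w i - zz (i+1)⟫
        ≤ 1/(2*K) * ‖g i - m i‖^2 + K/2 * ‖w i - zz (i+1)‖^2 := by
      have h1 := real_inner_le_norm (g i - m i) (w i - zz (i+1))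
      have h3 : (0:ℝ) < 2*K := by linarith
      have h6 : ‖g i - m i‖ * ‖w i - zz (i+1)‖ * (2*K)
          ≤ ‖g i - m i‖^2 + K^2 * ‖w i - zz (i+1)‖^2 := by
        nlinarith [sq_nonneg (‖g i - m i‖ - K * ‖w i - zz (i+1)‖)]
      have h7 : 1/(2*K) * ‖g i - m i‖^2 + K/2 * ‖w i - zz (i+1)‖^2
            - ‖g i - m i‖ * ‖w i - zz (i+1)‖
          = (‖g i - m i‖^2 + K^2 * ‖w i - zz (i+1)‖^2
            - ‖g i - m i‖ * ‖w i - zz (i+1)‖ * (2*K))/(2*K) := by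
        field_simp
      have h8 := div_nonneg (by linarith : (0:ℝ) ≤ ‖g i - m i‖^2 + K^2 * ‖w i - zz (i+1)‖^2
            - ‖g i - m i‖ * ‖w i - zz (i+1)‖ * (2*K)) (le_of_lt h3)
      linarith
    have e1 : ⟪G (i+1), zz (i+1)⟫ = ⟪G i, zz (i+1)⟫ + ⟪g i, zz (i+1)⟫ := by
      rw [hG, hG, sum_range_succ, inner_add_left]
    have e2 : ⟪g i - m i, w i - zz (i+1)⟫
        = ⟪g i, w i⟫ - ⟪g i, zz (i+1)⟫ - ⟪m i, w i⟫ + ⟪m i, zz (i+1)⟫ := by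
      rw [inner_sub_left, inner_sub_right, inner_sub_right]
      ring
    have e3 : ⟪g i, w i - xs⟫ = ⟪g i, w i⟫ - ⟪g i, xs⟫ := inner_sub_right _ _ _
    have e4 : ‖zz (i+1) - w i‖ = ‖w i - zz (i+1)‖ := norm_sub_rev _ _
    rw [e4] at A2
    rw [e3] at A3
    rw [e2] at Young
    simp only [hΦ]
    rw [e1]
    linarith
  have hsum := Finset.sum_le_sum perstep
  have htel : ∑ i ∈ range T, (Φ (i+1) - Φ i) = Φ T - Φ 0 := Finset.sum_range_sub Φ T
  have hΦ0 : Φ 0 = 0 := by simp [hΦ, hG, hzz0]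
  have hGxs : ∑ i ∈ range T, ⟪g i, xs⟫ = ⟪G T, xs⟫ := by rw [hG, sum_inner]
  have hsplit : ∑ i ∈ range T, (a i - b i - (Φ (i+1) - Φ i) + ⟪g i, xs⟫)
      = (∑ i ∈ range T, a i) - (∑ i ∈ range T, b i) - (Φ T - Φ 0) + ⟪G T, xs⟫ := by
    rw [Finset.sum_add_distrib, Finset.sum_sub_distrib, Finset.sum_sub_distrib, htel, hGxs]
  have hfin := hzstrong T le_rfl xs hxs
  have hxs2 : ‖xs‖^2 ≤ 1 := by nlinarith [norm_nonneg xs]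
  have hmulsum : ∑ i ∈ range T, 1/(2*K) * ‖g i - m i‖^2
      = 1/(2*K) * ∑ i ∈ range T, ‖g i - m i‖^2 := by rw [Finset.mul_sum]
  rw [hsplit, hmulsum] at hsum
  simp only [sub_zero] at hfin
  have hΦT : Φ T ≤ ⟪G T, xs⟫ + K/2 * ‖xs‖^2 := by
    have h9 := sq_nonneg ‖xs - zz T‖
    simp only [hΦ]
    nlinarith
  have hK2 : (0:ℝ) ≤ K/2 := by linarith
  rw [hΦ0, sub_zero] at hsum
  have hlast : K/2 * ‖xs‖^2 ≤ K/2 := mul_le_of_le_one_right hK2 hxs2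
  linarith [hsum, hΦT, hlast]

lemma sum_Icc_one {M : Type*} [AddCommMonoid M] (f : ℕ → M) (t : ℕ) :
    ∑ τ ∈ Finset.Icc 1 t, f τ = ∑ i ∈ Finset.range t, f (i+1) := by
  induction t with
  | zero => simp
  | succ n ih => rw [Finset.sum_Icc_succ_top (by omega), ih, Finset.sum_range_succ]

/-- Regret bound for the improved FTRL algorithm with step size `η ∈ (0,1]`. -/
theorem improved_ftrl_regret_bound {d T : ℕ} (hT : 1 ≤ T)
    (P : Set (Euc d)) (hPconv : Convex ℝ P) (hPcl : IsClosed P)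
    (hPball : P ⊆ Metric.closedBall 0 1) (h0P : (0 : Euc d) ∈ P)
    (c : ℕ → Euc d → ℝ) (hc0 : c 0 = fun _ => (0 : ℝ))
    (L : ℝ) (hL : 0 < L)
    (hconv : ∀ t, 1 ≤ t → t ≤ T → ConvexOn ℝ Set.univ (c t))
    (hdiff : ∀ t, 1 ≤ t → t ≤ T → Differentiable ℝ (c t))
    (hlip : ∀ t, 1 ≤ t → t ≤ T → ∀ u ∈ P, ∀ v ∈ P,
      ‖gradient (c t) u - gradient (c t) v‖ ≤ L * ‖u - v‖)
    (η : ℝ) (hη0 : 0 < η) (hη1 : η ≤ 1)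
    (x z : ℕ → Euc d) (hz0 : z 0 = 0)
    (hx : ∀ t, 1 ≤ t → t ≤ T → x t ∈ P ∧
      IsMinOn (fun u => ⟪gradient (c (t - 1)) (z (t - 1)), u⟫
        + L / (2 * η) * ‖u - z (t - 1)‖ ^ 2) P (x t))
    (hz : ∀ t, 1 ≤ t → t ≤ T → z t ∈ P ∧
      IsMinOn (fun u => (∑ τ ∈ Finset.Icc 1 t, ⟪gradient (c τ) (z (τ - 1)), u⟫)
        + L / (2 * η) * ‖u‖ ^ 2) P (z t))
    (xstar : Euc d) (hxstar : xstar ∈ P)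
    (hmin : IsMinOn (fun u => ∑ t ∈ Finset.Icc 1 T, c t u) P xstar) :
    (∑ t ∈ Finset.Icc 1 T, c t (x t)) - (∑ t ∈ Finset.Icc 1 T, c t xstar)
      ≤ L / (2 * η) + η / (2 * L) *
        ∑ t ∈ Finset.range T, ‖gradient (c (t + 1)) (z t) - gradient (c t) (z t)‖ ^ 2 := by
  set K := L / η with hKdef
  have hK : 0 < K := div_pos hL hη0
  have hhalf : L / (2 * η) = K / 2 := by rw [hKdef, div_div, mul_comm]
  have hKL : L ≤ K := by
    rw [hKdef, le_div_iff₀ hη0]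
    nlinarith
  have hetaL : η / (2 * L) = 1 / (2 * K) := by
    rw [hKdef]
    field_simp
  have hxsn : ‖xstar‖ ≤ 1 := by
    have h := hPball hxstar
    rwa [Metric.mem_closedBall, dist_zero_right] at h
  have hzzmem : ∀ t, t ≤ T → z t ∈ P := by
    intro t ht
    rcases Nat.eq_zero_or_pos t with h0 | h1
    · rw [h0, hz0]; exact h0P
    · exact (hz t h1 ht).1
  have hwmem : ∀ i, i < T → x (i+1) ∈ P := fun i hi => (hx (i+1) (by omega) (by omega)).1
  -- rewriting of the FTRL objective
  have hrwz : ∀ t (v : Euc d),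
      (∑ τ ∈ Finset.Icc 1 t, ⟪gradient (c τ) (z (τ - 1)), v⟫) + L / (2 * η) * ‖v‖ ^ 2
      = ⟪∑ i ∈ range t, gradient (c (i+1)) (z i), v⟫ + K/2 * ‖v - 0‖ ^ 2 := by
    intro t v
    rw [sub_zero, hhalf, sum_inner]
    congr 1
    rw [sum_Icc_one (fun τ => (⟪gradient (c τ) (z (τ - 1)), v⟫ : ℝ)) t]
    simp only [Nat.add_sub_cancel]
  have hzstrong : ∀ t, t ≤ T → ∀ u ∈ P,
      ⟪∑ i ∈ range t, gradient (c (i+1)) (z i), z t⟫ + K/2*‖z t - 0‖^2 + K/2*‖u - z t‖^2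
      ≤ ⟪∑ i ∈ range t, gradient (c (i+1)) (z i), u⟫ + K/2*‖u - 0‖^2 := by
    intro t ht
    rcases Nat.eq_zero_or_pos t with h0 | h1
    · subst h0
      intro u hu
      simp [hz0]
    · apply quad_strong hPconv hK _ 0 (z t) (hz t h1 ht).1
      intro u hu
      have h2 := isMinOn_iff.mp (hz t h1 ht).2 u hu
      rw [← hrwz t u, ← hrwz t (z t)]
      exact h2
  have hwstrong : ∀ i, i < T → ∀ u ∈ P,
      ⟪gradient (c i) (z i), x (i+1)⟫ + K/2*‖x (i+1) - z i‖^2 + K/2*‖u - x (i+1)‖^2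
      ≤ ⟪gradient (c i) (z i), u⟫ + K/2*‖u - z i‖^2 := by
    intro i hi
    apply quad_strong hPconv hK _ (z i) (x (i+1)) (hwmem i hi)
    intro u hu
    have h2 := isMinOn_iff.mp (hx (i+1) (by omega) (by omega)).2 u hu
    simp only [Nat.add_sub_cancel] at h2
    rw [hhalf] at h2
    exact h2
  have hcost : ∀ i, i < T → c (i+1) (x (i+1)) ≤ c (i+1) xstar
      + ⟪gradient (c (i+1)) (z i), x (i+1) - xstar⟫ + K/2 * ‖x (i+1) - z i‖^2 := by
    intro i hi
    have h1t : 1 ≤ i+1 := by omega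
    have hiT : i+1 ≤ T := by omega
    have hd := descent_lemma (c (i+1)) (hdiff _ h1t hiT) hPconv (le_of_lt hL)
      (hlip _ h1t hiT) (z i) (x (i+1)) (hzzmem i (by omega)) (hwmem i hi)
    have hc := convex_grad_ineq (c (i+1)) (hconv _ h1t hiT) (hdiff _ h1t hiT) (z i) xstar
    have e1 : ⟪gradient (c (i+1)) (z i), x (i+1) - z i⟫
        = ⟪gradient (c (i+1)) (z i), x (i+1) - xstar⟫
          + ⟪gradient (c (i+1)) (z i), xstar - z i⟫ := by
      rw [← inner_add_right]
      congr 1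
      module
    have hn : (0:ℝ) ≤ ‖x (i+1) - z i‖^2 := sq_nonneg _
    have hLK : L/2 * ‖x (i+1) - z i‖^2 ≤ K/2 * ‖x (i+1) - z i‖^2 := by nlinarith
    linarith
  have core := ftrl_core (T := T) hK (fun i => gradient (c (i+1)) (z i))
    (fun i => gradient (c i) (z i)) (fun i => x (i+1)) z
    (fun t => ∑ i ∈ range t, gradient (c (i+1)) (z i)) (fun t => rfl)
    xstar hxstar hxsn hz0 hzzmem hzstrong hwstrong
    (fun i => c (i+1) (x (i+1))) (fun i => c (i+1) xstar) hcost
  rw [sum_Icc_one (fun t => c t (x t)) T, sum_Icc_one (fun t => c t xstar) T, hhalf, hetaL]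
  exact core
end

section
/- (Theorem 1) Suppose EVAR > 0 and the step size is η = min{1, L/√EVAR}, where EVAR = ∑_{t=0}^{T−1} ‖∇c_{t+1}(z_t) − ∇c_t(z_t)‖₂² is the extended sequential variation of the run. Then the improved-FTRL algorithm satisfies ∑_{t=1}^T c_t(x_t) − min_{x∈𝒫} ∑_{t=1}^T c_t(x) ≤ max(L, √EVAR). -/
open Finset
open scoped RealInnerProductSpace

section Helpers

variable {E : Type*} [NormedAddCommGroup E] [InnerProductSpace ℝ E] [CompleteSpace E]

lemma inner_gradient_eq (f : E → ℝ) (x v : E) : ⟪gradient f x, v⟫ = fderiv ℝ f x v := by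
  rw [gradient]; exact InnerProductSpace.toDual_symm_apply

lemma hasDerivAt_slice (c : E → ℝ) (hdiff : Differentiable ℝ c) (v w : E) (θ : ℝ) :
    HasDerivAt (fun s : ℝ => c (v + s • w)) ⟪gradient c (v + θ • w), w⟫ θ := by
  have h1 : HasDerivAt (fun s : ℝ => v + s • w) w θ := by
    simpa using ((hasDerivAt_id θ).smul_const w).const_add v
  have h2 := (hdiff (v + θ • w)).hasFDerivAt.comp_hasDerivAt θ h1
  rw [inner_gradient_eq]; exact h2

/-- convexity lower bound -/
lemma convex_lower (c : E → ℝ) (hconv : ConvexOn ℝ Set.univ c) (hdiff : Differentiable ℝ c)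
    (u v : E) : c v + ⟪gradient c v, u - v⟫ ≤ c u := by
  set w := u - v with hw
  have haff : ConvexOn ℝ Set.univ (fun s : ℝ => c (v + s • w)) := by
    have := hconv.comp_affineMap (AffineMap.lineMap v u)
    have heq : (fun s : ℝ => c (v + s • w)) = c ∘ (AffineMap.lineMap v u) := by
      funext s
      simp [AffineMap.lineMap_apply, hw, add_comm]
    rw [heq]
    simpa using this
  have hd := hasDerivAt_slice c hdiff v w 0
  have := haff.le_slope_of_hasDerivAt (Set.mem_univ (0:ℝ)) (Set.mem_univ (1:ℝ)) zero_lt_one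
    (by simpa using hd)
  simp [slope_def_field, hw] at this
  rw [inner_gradient_eq, hw, map_sub]
  linarith

/-- smoothness upper bound -/
lemma smooth_upper (c : E → ℝ) (hdiff : Differentiable ℝ c) {P : Set E} (hP : Convex ℝ P)
    {L : ℝ}
    (hlip : ∀ a ∈ P, ∀ b ∈ P, ‖gradient c a - gradient c b‖ ≤ L * ‖a - b‖)
    {u v : E} (hu : u ∈ P) (hv : v ∈ P) :
    c u ≤ c v + ⟪gradient c v, u - v⟫ + L / 2 * ‖u - v‖ ^ 2 := by
  set w := u - v with hw
  set g := gradient c v with hg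
  set h : ℝ → ℝ := fun θ => c (v + θ • w) - θ * ⟪g, w⟫ - L / 2 * θ ^ 2 * ‖w‖ ^ 2 with hh
  have hdh : ∀ θ : ℝ, HasDerivAt h
      (⟪gradient c (v + θ • w), w⟫ - ⟪g, w⟫ - L * θ * ‖w‖ ^ 2) θ := by
    intro θ
    have h1 := hasDerivAt_slice c hdiff v w θ
    have h2 : HasDerivAt (fun θ : ℝ => θ * ⟪g, w⟫) ⟪g, w⟫ θ := by
      simpa using (hasDerivAt_id θ).mul_const ⟪g, w⟫
    have h3 : HasDerivAt (fun θ : ℝ => L / 2 * θ ^ 2 * ‖w‖ ^ 2) (L * θ * ‖w‖ ^ 2) θ := by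
      have : HasDerivAt (fun θ : ℝ => θ ^ 2) (2 * θ) θ := by
        simpa using hasDerivAt_pow 2 θ
      have := ((this.const_mul (L / 2)).mul_const (‖w‖ ^ 2))
      exact this.congr_deriv (by ring)
    exact (h1.sub h2).sub h3
  have hanti : AntitoneOn h (Set.Icc (0:ℝ) 1) := by
    apply antitoneOn_of_deriv_nonpos (convex_Icc 0 1)
    · exact fun θ _ => ((hdh θ).continuousAt).continuousWithinAt
    · exact fun θ _ => ((hdh θ).differentiableAt).differentiableWithinAt
    · intro θ hθ
      rw [interior_Icc] at hθ
      rw [(hdh θ).deriv]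
      have hmem : v + θ • w ∈ P := hP.add_smul_sub_mem hv hu ⟨le_of_lt hθ.1, le_of_lt hθ.2⟩
      have hcs : ⟪gradient c (v + θ • w) - g, w⟫ ≤ ‖gradient c (v + θ • w) - g‖ * ‖w‖ :=
        real_inner_le_norm _ _
      have hlipb : ‖gradient c (v + θ • w) - g‖ ≤ L * (θ * ‖w‖) := by
        have := hlip _ hmem _ hv
        simpa [norm_smul, abs_of_pos hθ.1] using this
      have : ⟪gradient c (v + θ • w) - g, w⟫ ≤ L * θ * ‖w‖ ^ 2 := by
        calc ⟪gradient c (v + θ • w) - g, w⟫ ≤ ‖gradient c (v + θ • w) - g‖ * ‖w‖ := hcs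
        _ ≤ L * (θ * ‖w‖) * ‖w‖ := by
            apply mul_le_mul_of_nonneg_right hlipb (norm_nonneg _)
        _ = L * θ * ‖w‖ ^ 2 := by ring
      rw [inner_sub_left] at this
      linarith
  have h10 : h 1 ≤ h 0 := hanti (by norm_num) (by norm_num) zero_le_one
  simp [hh, hw] at h10
  linarith

end Helpers

section Quad

variable {E : Type*} [NormedAddCommGroup E] [InnerProductSpace ℝ E]

/-- strong minimality of the minimizer of a quadratic over a convex set -/
lemma quad_strong_min {P : Set E} (hP : Convex ℝ P) {lam : ℝ} (hlam : 0 < lam)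
    (a b : E) {x : E} (hxP : x ∈ P)
    (hmin : IsMinOn (fun u => ⟪a, u⟫ + lam * ‖u - b‖ ^ 2) P x)
    {u : E} (hu : u ∈ P) :
    ⟪a, x⟫ + lam * ‖x - b‖ ^ 2 + lam * ‖u - x‖ ^ 2 ≤ ⟪a, u⟫ + lam * ‖u - b‖ ^ 2 := by
  set w := u - x with hw
  set D : ℝ := ⟪a, w⟫ + 2 * lam * ⟪x - b, w⟫ with hD
  have key : ∀ θ : ℝ, 0 < θ → θ ≤ 1 → 0 ≤ D + lam * θ * ‖w‖ ^ 2 := by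
    intro θ hθ0 hθ1
    have hmem : x + θ • w ∈ P := hP.add_smul_sub_mem hxP hu ⟨le_of_lt hθ0, hθ1⟩
    have h := hmin hmem
    simp only [Set.mem_setOf_eq] at h
    have hexp : ⟪a, x + θ • w⟫ + lam * ‖x + θ • w - b‖ ^ 2
        = ⟪a, x⟫ + lam * ‖x - b‖ ^ 2 + θ * D + lam * θ ^ 2 * ‖w‖ ^ 2 := by
      have h1 : x + θ • w - b = (x - b) + θ • w := by abel
      rw [inner_add_right, h1, norm_add_sq_real, inner_smul_right, norm_smul,
        real_inner_smul_right]
      simp [hD]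
      ring_nf
      simp [abs_of_pos hθ0]
      ring
    rw [hexp] at h
    have : 0 ≤ θ * D + lam * θ ^ 2 * ‖w‖ ^ 2 := by linarith
    have h2 : 0 ≤ θ * (D + lam * θ * ‖w‖ ^ 2) := by ring_nf; ring_nf at this; linarith
    nlinarith
  have hDnn : 0 ≤ D := by
    by_contra hneg
    push_neg at hneg
    have hwne : w ≠ 0 := by
      intro h0
      rw [h0] at hD
      simp at hD
      simp [hD] at hneg
    have hwn : 0 < ‖w‖ := norm_pos_iff.mpr hwne
    have hwpos : 0 < ‖w‖ ^ 2 := by positivity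
    set θ := min 1 (-D / (2 * lam * ‖w‖ ^ 2)) with hθ
    have hθpos : 0 < θ := by
      apply lt_min one_pos
      apply div_pos (by linarith) (by positivity)
    have hθ1 : θ ≤ 1 := min_le_left _ _
    have := key θ hθpos hθ1
    have hle : lam * θ * ‖w‖ ^ 2 ≤ -D / 2 := by
      have hθle : θ ≤ -D / (2 * lam * ‖w‖ ^ 2) := min_le_right _ _
      have h2 : lam * θ * ‖w‖ ^ 2 ≤ lam * (-D / (2 * lam * ‖w‖ ^ 2)) * ‖w‖ ^ 2 := by
        have := mul_le_mul_of_nonneg_left hθle (le_of_lt hlam)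
        exact mul_le_mul_of_nonneg_right this (le_of_lt hwpos)
      have h3 : lam * (-D / (2 * lam * ‖w‖ ^ 2)) * ‖w‖ ^ 2 = -D / 2 := by
        field_simp
      linarith
    linarith
  have hexp2 : ⟪a, u⟫ + lam * ‖u - b‖ ^ 2
      = ⟪a, x⟫ + lam * ‖x - b‖ ^ 2 + D + lam * ‖w‖ ^ 2 := by
    have h1 : u - b = (x - b) + w := by rw [hw]; abel
    have h2 : u = x + w := by rw [hw]; abel
    have h3 : x + w - b = (x - b) + w := by abel
    rw [h2, inner_add_right, h3, norm_add_sq_real]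
    simp [hD]
    ring
  rw [hexp2]
  linarith

end Quad

lemma amgm_aux {lam A B : ℝ} (h : 0 < lam) : A * B ≤ A ^ 2 / (4 * lam) + lam * B ^ 2 := by
  have h1 : A * B - lam * B ^ 2 ≤ A ^ 2 / (4 * lam) := by
    rw [le_div_iff₀ (by positivity : (0:ℝ) < 4 * lam)]
    nlinarith [sq_nonneg (A - 2 * lam * B)]
  linarith

set_option maxHeartbeats 2000000 in
/-- Theorem 1: regret bound of the improved FTRL algorithm with the tuned step size
`η = min{1, L/√EVAR}`, where `EVAR` is the extended sequential variation of the run. -/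
theorem improved_ftrl_theorem_one {d T : ℕ} (hT : 1 ≤ T)
    (P : Set (Euc d)) (hPconv : Convex ℝ P) (hPcl : IsClosed P)
    (hPball : P ⊆ Metric.closedBall 0 1) (h0P : (0 : Euc d) ∈ P)
    (c : ℕ → Euc d → ℝ) (hc0 : c 0 = fun _ => (0 : ℝ))
    (L : ℝ) (hL : 0 < L)
    (hconv : ∀ t, 1 ≤ t → t ≤ T → ConvexOn ℝ Set.univ (c t))
    (hdiff : ∀ t, 1 ≤ t → t ≤ T → Differentiable ℝ (c t))
    (hlip : ∀ t, 1 ≤ t → t ≤ T → ∀ u ∈ P, ∀ v ∈ P,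
      ‖gradient (c t) u - gradient (c t) v‖ ≤ L * ‖u - v‖)
    (x z : ℕ → Euc d) (hz0 : z 0 = 0)
    (V : ℝ)
    (hV : V = ∑ t ∈ Finset.range T, ‖gradient (c (t + 1)) (z t) - gradient (c t) (z t)‖ ^ 2)
    (hVpos : 0 < V)
    (η : ℝ) (hηdef : η = min 1 (L / Real.sqrt V))
    (hx : ∀ t, 1 ≤ t → t ≤ T → x t ∈ P ∧
      IsMinOn (fun u => ⟪gradient (c (t - 1)) (z (t - 1)), u⟫
        + L / (2 * η) * ‖u - z (t - 1)‖ ^ 2) P (x t))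
    (hz : ∀ t, 1 ≤ t → t ≤ T → z t ∈ P ∧
      IsMinOn (fun u => (∑ τ ∈ Finset.Icc 1 t, ⟪gradient (c τ) (z (τ - 1)), u⟫)
        + L / (2 * η) * ‖u‖ ^ 2) P (z t))
    (xstar : Euc d) (hxstar : xstar ∈ P)
    (hmin : IsMinOn (fun u => ∑ t ∈ Finset.Icc 1 T, c t u) P xstar) :
    (∑ t ∈ Finset.Icc 1 T, c t (x t)) - (∑ t ∈ Finset.Icc 1 T, c t xstar)
      ≤ max L (Real.sqrt V) := by
  -- basic positivity facts
  have hS : 0 < Real.sqrt V := Real.sqrt_pos.mpr hVpos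
  have hη0 : 0 < η := by rw [hηdef]; exact lt_min one_pos (div_pos hL hS)
  have hη1 : η ≤ 1 := by rw [hηdef]; exact min_le_left _ _
  have hlam : 0 < L / (2 * η) := by positivity
  have hlamL : L / 2 ≤ L / (2 * η) := by
    apply div_le_div_of_nonneg_left hL.le (by positivity) (by nlinarith)
  -- membership facts
  have zmem : ∀ s, s ≤ T → z s ∈ P := by
    intro s hs
    rcases Nat.eq_zero_or_pos s with h | h
    · subst h; rw [hz0]; exact h0P
    · exact (hz s h hs).1
  have xmem : ∀ s, s < T → x (s + 1) ∈ P := fun s hs => (hx (s + 1) (by omega) (by omega)).1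
  -- reindexing
  have hreidx : ∀ (f : ℕ → ℝ) (t : ℕ), ∑ τ ∈ Icc 1 t, f τ = ∑ s ∈ range t, f (s + 1) := by
    intro f t
    rw [← Finset.Ico_add_one_right_eq_Icc, Finset.sum_Ico_eq_sum_range]
    simp [add_comm]
  set G : ℕ → Euc d := fun t => ∑ τ ∈ Icc 1 t, gradient (c τ) (z (τ - 1)) with hG
  -- strong minimality of z t
  have hzstrong : ∀ t, 1 ≤ t → t ≤ T → ∀ u ∈ P,
      ⟪G t, z t⟫ + L / (2 * η) * ‖z t‖ ^ 2 + L / (2 * η) * ‖u - z t‖ ^ 2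
        ≤ ⟪G t, u⟫ + L / (2 * η) * ‖u‖ ^ 2 := by
    intro t h1 h2 u hu
    have hm := (hz t h1 h2).2
    have heq : (fun u : Euc d => (∑ τ ∈ Icc 1 t, ⟪gradient (c τ) (z (τ - 1)), u⟫)
        + L / (2 * η) * ‖u‖ ^ 2)
        = fun u : Euc d => ⟪G t, u⟫ + L / (2 * η) * ‖u - 0‖ ^ 2 := by
      funext v
      rw [hG]
      simp [sum_inner]
    rw [heq] at hm
    have := quad_strong_min hPconv hlam (G t) 0 (hz t h1 h2).1 hm hu
    simpa using this
  -- strong minimality of x (s+1)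
  have hxstrong : ∀ s, s < T → ∀ u ∈ P,
      ⟪gradient (c s) (z s), x (s + 1)⟫ + L / (2 * η) * ‖x (s + 1) - z s‖ ^ 2
        + L / (2 * η) * ‖u - x (s + 1)‖ ^ 2
        ≤ ⟪gradient (c s) (z s), u⟫ + L / (2 * η) * ‖u - z s‖ ^ 2 := by
    intro s hs u hu
    have hm := (hx (s + 1) (by omega) (by omega)).2
    simp only [Nat.add_sub_cancel] at hm
    exact quad_strong_min hPconv hlam _ _ (hx (s + 1) (by omega) (by omega)).1 hm hu
  -- per-step convexity/smoothness bound
  have hper : ∀ s, s < T →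
      c (s + 1) (x (s + 1)) - c (s + 1) xstar
        ≤ ⟪gradient (c (s + 1)) (z s), x (s + 1) - xstar⟫
          + L / 2 * ‖x (s + 1) - z s‖ ^ 2 := by
    intro s hs
    have h1 := smooth_upper (c (s + 1)) (hdiff (s + 1) (by omega) (by omega)) hPconv
      (hlip (s + 1) (by omega) (by omega)) (xmem s hs) (zmem s (by omega))
    have h2 := convex_lower (c (s + 1)) (hconv (s + 1) (by omega) (by omega))
      (hdiff (s + 1) (by omega) (by omega)) xstar (z s)
    have hinner : ⟪gradient (c (s + 1)) (z s), x (s + 1) - z s⟫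
        - ⟪gradient (c (s + 1)) (z s), xstar - z s⟫
        = ⟪gradient (c (s + 1)) (z s), x (s + 1) - xstar⟫ := by
      rw [← inner_sub_right]
      congr 1
      abel
    linarith
  -- master per-step inequality
  have hmaster : ∀ s ∈ range T,
      c (s + 1) (x (s + 1)) - c (s + 1) xstar
        ≤ ‖gradient (c (s + 1)) (z s) - gradient (c s) (z s)‖ ^ 2 / (4 * (L / (2 * η)))
          + L / (2 * η) * ‖z (s + 1) - z s‖ ^ 2
          + (L / 2 - L / (2 * η)) * ‖x (s + 1) - z s‖ ^ 2
          + (⟪gradient (c (s + 1)) (z s), z (s + 1)⟫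
            - ⟪gradient (c (s + 1)) (z s), xstar⟫) := by
    intro s hs
    rw [mem_range] at hs
    set a := gradient (c (s + 1)) (z s)
    set b := gradient (c s) (z s)
    have hC := hper s hs
    have hA := hxstrong s hs (z (s + 1)) (zmem (s + 1) (by omega))
    have hCS : ⟪a - b, x (s + 1) - z (s + 1)⟫ ≤ ‖a - b‖ * ‖x (s + 1) - z (s + 1)‖ :=
      real_inner_le_norm _ _
    have hAM : ‖a - b‖ * ‖x (s + 1) - z (s + 1)‖
        ≤ ‖a - b‖ ^ 2 / (4 * (L / (2 * η)))
          + L / (2 * η) * ‖x (s + 1) - z (s + 1)‖ ^ 2 := amgm_aux hlam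
    have e1 : ⟪a, x (s + 1) - xstar⟫ = ⟪a, x (s + 1)⟫ - ⟪a, xstar⟫ := inner_sub_right _ _ _
    have e2 : ⟪a - b, x (s + 1) - z (s + 1)⟫
        = ⟪a, x (s + 1)⟫ - ⟪a, z (s + 1)⟫ - ⟪b, x (s + 1)⟫ + ⟪b, z (s + 1)⟫ := by
      rw [inner_sub_left, inner_sub_right, inner_sub_right]
      ring
    have e3 : ‖z (s + 1) - x (s + 1)‖ = ‖x (s + 1) - z (s + 1)‖ := norm_sub_rev _ _
    rw [e3] at hA
    linarith
  -- be-the-leader induction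
  have hBTL : ∀ t, t ≤ T →
      (∑ s ∈ range t, ⟪gradient (c (s + 1)) (z s), z (s + 1)⟫)
        + L / (2 * η) * ∑ s ∈ range t, ‖z (s + 1) - z s‖ ^ 2
        ≤ ⟪G t, z t⟫ + L / (2 * η) * ‖z t‖ ^ 2 := by
    intro t
    induction t with
    | zero => intro _; simp [hG, hz0]
    | succ t ih =>
      intro hle
      have ht : t ≤ T := by omega
      have iht := ih ht
      have hstrong : ⟪G t, z t⟫ + L / (2 * η) * ‖z t‖ ^ 2
          + L / (2 * η) * ‖z (t + 1) - z t‖ ^ 2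
          ≤ ⟪G t, z (t + 1)⟫ + L / (2 * η) * ‖z (t + 1)‖ ^ 2 := by
        rcases Nat.eq_zero_or_pos t with h0 | h1
        · subst h0
          simp [hG, hz0]
        · exact hzstrong t h1 ht (z (t + 1)) (zmem (t + 1) hle)
      have hGsucc : G (t + 1) = G t + gradient (c (t + 1)) (z t) := by
        simp only [hG]
        rw [Finset.sum_Icc_succ_top (by omega : 1 ≤ t + 1)]
        simp
      rw [sum_range_succ, sum_range_succ, hGsucc, inner_add_left, mul_add]
      linarith
  have hfinal := hzstrong T hT le_rfl xstar hxstar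
  have hBTLT := hBTL T le_rfl
  -- identify ⟪G T, xstar⟫ with the sum
  have hGx : ⟪G T, xstar⟫ = ∑ s ∈ range T, ⟪gradient (c (s + 1)) (z s), xstar⟫ := by
    rw [hG, sum_inner, hreidx (fun τ => ⟪gradient (c τ) (z (τ - 1)), xstar⟫) T]
    simp
  -- sum the master inequality
  have hsum := Finset.sum_le_sum hmaster
  have hLHS : (∑ t ∈ Finset.Icc 1 T, c t (x t)) - (∑ t ∈ Finset.Icc 1 T, c t xstar)
      = ∑ s ∈ range T, (c (s + 1) (x (s + 1)) - c (s + 1) xstar) := by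
    rw [Finset.sum_sub_distrib, ← hreidx (fun t => c t (x t)) T, ← hreidx (fun t => c t xstar) T]
  -- split the RHS sum
  have hRHS : (∑ s ∈ range T,
      (‖gradient (c (s + 1)) (z s) - gradient (c s) (z s)‖ ^ 2 / (4 * (L / (2 * η)))
        + L / (2 * η) * ‖z (s + 1) - z s‖ ^ 2
        + (L / 2 - L / (2 * η)) * ‖x (s + 1) - z s‖ ^ 2
        + (⟪gradient (c (s + 1)) (z s), z (s + 1)⟫
          - ⟪gradient (c (s + 1)) (z s), xstar⟫)))
      = V / (4 * (L / (2 * η)))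
        + L / (2 * η) * ∑ s ∈ range T, ‖z (s + 1) - z s‖ ^ 2
        + (L / 2 - L / (2 * η)) * ∑ s ∈ range T, ‖x (s + 1) - z s‖ ^ 2
        + ((∑ s ∈ range T, ⟪gradient (c (s + 1)) (z s), z (s + 1)⟫)
          - ∑ s ∈ range T, ⟪gradient (c (s + 1)) (z s), xstar⟫) := by
    rw [Finset.sum_add_distrib, Finset.sum_add_distrib, Finset.sum_add_distrib,
      Finset.sum_sub_distrib, ← Finset.sum_div, ← Finset.mul_sum, ← Finset.mul_sum, hV]
  -- put everything together
  have hxnorm : ‖xstar‖ ≤ 1 := by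
    have := hPball hxstar
    rwa [Metric.mem_closedBall, dist_zero_right] at this
  have hSx : (0:ℝ) ≤ ∑ s ∈ range T, ‖x (s + 1) - z s‖ ^ 2 :=
    Finset.sum_nonneg fun s _ => by positivity
  have hkey : (∑ t ∈ Finset.Icc 1 T, c t (x t)) - (∑ t ∈ Finset.Icc 1 T, c t xstar)
      ≤ V / (4 * (L / (2 * η))) + L / (2 * η) := by
    rw [hLHS]
    have h1 : (∑ s ∈ range T, ⟪gradient (c (s + 1)) (z s), z (s + 1)⟫)
        ≤ ⟪G T, xstar⟫ + L / (2 * η) * ‖xstar‖ ^ 2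
          - L / (2 * η) * ∑ s ∈ range T, ‖z (s + 1) - z s‖ ^ 2 := by
      have h0 : (0:ℝ) ≤ L / (2 * η) * ‖xstar - z T‖ ^ 2 := by positivity
      linarith
    have h2 : (L / 2 - L / (2 * η)) * ∑ s ∈ range T, ‖x (s + 1) - z s‖ ^ 2 ≤ 0 :=
      mul_nonpos_of_nonpos_of_nonneg (by linarith) hSx
    have h3 : L / (2 * η) * ‖xstar‖ ^ 2 ≤ L / (2 * η) := by
      have : ‖xstar‖ ^ 2 ≤ 1 := by nlinarith [norm_nonneg xstar]
      nlinarith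
    rw [hGx] at h1
    refine (hsum.trans_eq hRHS).trans ?_
    linarith
  -- final arithmetic with the tuned step size
  refine hkey.trans ?_
  rcases le_total (L / Real.sqrt V) 1 with hc | hc
  · have hηeq : η = L / Real.sqrt V := by rw [hηdef, min_eq_right hc]
    have hSV : Real.sqrt V ^ 2 = V := Real.sq_sqrt hVpos.le
    have e1 : L / (2 * η) = Real.sqrt V / 2 := by
      rw [hηeq]
      field_simp
    have e2 : V / (4 * (Real.sqrt V / 2)) = Real.sqrt V / 2 := by
      have hSne := hS.ne'
      field_simp
      nlinarith [hSV]
    have heq : V / (4 * (L / (2 * η))) + L / (2 * η) = Real.sqrt V := by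
      rw [e1, e2]
      ring
    rw [heq]
    exact le_max_right _ _
  · have hηeq : η = 1 := by rw [hηdef, min_eq_left hc]
    have hSL : Real.sqrt V ≤ L := (one_le_div hS).mp hc
    have hVL : V ≤ L ^ 2 := by
      have hSV : Real.sqrt V ^ 2 = V := Real.sq_sqrt hVpos.le
      nlinarith [hS]
    have : V / (4 * (L / (2 * η))) + L / (2 * η) ≤ L := by
      rw [hηeq]
      rw [div_add' _ _ _ (by positivity), div_le_iff₀ (by positivity)]
      field_simp
      nlinarith
    exact this.trans (le_max_left _ _)
end

section
/- (Per-step inequality in the proof of Theorem 2) Under the prox-method updates with step size η ∈ (0, 1/2], for every t = 1,…,T and every z ∈ 𝒫: (η/L)(c_t(x_t) − c_t(z)) ≤ (1/2)(‖z − z_{t−1}‖₂² − ‖z − z_t‖₂²) + (2η²/L²)‖∇c_t(z_{t−1}) − ∇c_{t−1}(z_{t−1})‖₂². -/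
open Finset
open scoped RealInnerProductSpace

/-- Squared-norm expansion of a shift along a direction. -/
lemma expand_norm_sq {d : ℕ} (q r : Euc d) (s : ℝ) :
    ‖q + s • r‖ ^ 2 = ‖q‖ ^ 2 + 2 * s * ⟪q, r⟫ + s ^ 2 * ‖r‖ ^ 2 := by
  rw [norm_add_sq_real, real_inner_smul_right, norm_smul]
  rw [mul_pow, Real.norm_eq_abs, sq_abs]
  ring

/-- Strong-convexity type inequality for the minimizer of a linear-plus-quadratic
function over a convex set. -/
lemma prox_min_key {d : ℕ} {P : Set (Euc d)} (hP : Convex ℝ P)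
    (v p m : Euc d) (hm : m ∈ P) (γ : ℝ) (hγ : 0 < γ)
    (hmin : IsMinOn (fun u => ⟪v, u⟫ + γ * ‖u - p‖ ^ 2) P m) :
    ∀ w ∈ P, ⟪v, m⟫ + γ * ‖m - p‖ ^ 2 + γ * ‖w - m‖ ^ 2 ≤ ⟪v, w⟫ + γ * ‖w - p‖ ^ 2 := by
  intro w hw
  set A : ℝ := ⟪v, w - m⟫ + 2 * γ * ⟪m - p, w - m⟫ with hAdef
  set C : ℝ := γ * ‖w - m‖ ^ 2 with hCdef
  have hC : 0 ≤ C := by positivity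
  have hstep : ∀ l : ℝ, 0 < l → l ≤ 1 → 0 ≤ l * A + l ^ 2 * C := by
    intro l hl0 hl1
    have hmem : m + l • (w - m) ∈ P := by
      have h : (1 - l) • m + l • w = m + l • (w - m) := by
        rw [smul_sub, sub_smul, one_smul]; abel
      rw [← h]
      exact hP hm hw (by linarith) (le_of_lt hl0) (by ring)
    have := hmin hmem
    simp only [Set.mem_setOf_eq] at this
    have hexp : ‖m + l • (w - m) - p‖ ^ 2
        = ‖m - p‖ ^ 2 + 2 * l * ⟪m - p, w - m⟫ + l ^ 2 * ‖w - m‖ ^ 2 := by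
      have : m + l • (w - m) - p = (m - p) + l • (w - m) := by abel
      rw [this, expand_norm_sq]
    have hin : ⟪v, m + l • (w - m)⟫ = ⟪v, m⟫ + l * ⟪v, w - m⟫ := by
      rw [inner_add_right, real_inner_smul_right]
    rw [hexp, hin] at this
    nlinarith [this]
  have hA : 0 ≤ A := by
    by_contra h
    push_neg at h
    set l : ℝ := min 1 ((-A) / (2 * (C + 1))) with hldef
    have hl0 : 0 < l := lt_min one_pos (div_pos (by linarith) (by linarith))
    have hl1 : l ≤ 1 := min_le_left _ _
    have hl2 : l ≤ (-A) / (2 * (C + 1)) := min_le_right _ _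
    have := hstep l hl0 hl1
    have hlC : l * C < -A := by
      have h1 : l * (C + 1) ≤ (-A) / (2 * (C + 1)) * (C + 1) :=
        mul_le_mul_of_nonneg_right hl2 (by linarith)
      have h2 : (-A) / (2 * (C + 1)) * (C + 1) = (-A) / 2 := by
        field_simp
      nlinarith
    nlinarith [mul_pos hl0 hl0, hl0]
  have hwp : ‖w - p‖ ^ 2 = ‖m - p‖ ^ 2 + 2 * ⟪m - p, w - m⟫ + ‖w - m‖ ^ 2 := by
    have h : w - p = (m - p) + (1 : ℝ) • (w - m) := by rw [one_smul]; abel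
    rw [h, expand_norm_sq]; ring
  have hvw : ⟪v, w⟫ = ⟪v, m⟫ + ⟪v, w - m⟫ := by
    rw [← inner_add_right]; congr 1; abel
  rw [hwp, hvw]
  nlinarith [hA, hC]

/-- Gradient inequality for convex differentiable functions. -/
lemma grad_convex_ineq {d : ℕ} (f : Euc d → ℝ) (hconv : ConvexOn ℝ Set.univ f)
    (hdiff : Differentiable ℝ f) (a w : Euc d) :
    ⟪gradient f a, w - a⟫ ≤ f w - f a := by
  set φ : ℝ → ℝ := fun s => f (s • (w - a) + a) with hφdef
  have hline : HasDerivAt (fun s : ℝ => s • (w - a) + a) (w - a) 0 := by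
    simpa using ((hasDerivAt_id (0 : ℝ)).smul_const (w - a)).add_const a
  have hfd : HasFDerivAt f ((InnerProductSpace.toDual ℝ (Euc d)) (gradient f a)) a :=
    hasGradientAt_iff_hasFDerivAt.mp (hdiff a).hasGradientAt
  have hfd' : HasFDerivAt f ((InnerProductSpace.toDual ℝ (Euc d)) (gradient f a))
      ((0 : ℝ) • (w - a) + a) := by simpa using hfd
  have hcomp : HasDerivAt φ ⟪gradient f a, w - a⟫ 0 := by
    have h := hfd'.comp_hasDerivAt 0 hline
    rw [InnerProductSpace.toDual_apply_apply] at h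
    exact h
  have hφconv : ConvexOn ℝ Set.univ φ := by
    have h := hconv.comp_affineMap
      ((LinearMap.toAffineMap (LinearMap.toSpanSingleton ℝ _ (w - a))) + AffineMap.const ℝ ℝ a)
    simp [Function.comp, LinearMap.toSpanSingleton_apply] at h
    have e : φ = f ∘ (⇑(LinearMap.toSpanSingleton ℝ (Euc d) (w - a)) + Function.const ℝ a) := by
      funext s
      simp [hφdef]
    rw [e]
    exact h
  have hs := hφconv.le_slope_of_hasDerivAt (Set.mem_univ (0:ℝ)) (Set.mem_univ (1:ℝ))
    zero_lt_one hcomp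
  have h0 : φ 0 = f a := by simp [hφdef]
  have h1 : φ 1 = f w := by simp [hφdef]
  rw [slope_def_field, h0, h1, show (1:ℝ) - 0 = 1 by norm_num, div_one] at hs
  exact hs

set_option maxHeartbeats 1600000 in
/-- The per-step inequality in the proof of Theorem 2: under the prox-method updates
with step size `η ∈ (0, 1/2]`, for every `t = 1,…,T` and every `w ∈ P`,
`(η/L)(c_t(x_t) - c_t(w)) ≤ (1/2)(‖w - z_{t-1}‖² - ‖w - z_t‖²)
  + (2η²/L²)‖∇c_t(z_{t-1}) - ∇c_{t-1}(z_{t-1})‖²`. -/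
theorem prox_per_step_inequality {d T : ℕ} (hT : 1 ≤ T)
    (P : Set (Euc d)) (hPconv : Convex ℝ P) (hPcl : IsClosed P)
    (hPball : P ⊆ Metric.closedBall 0 1) (h0P : (0 : Euc d) ∈ P)
    (c : ℕ → Euc d → ℝ) (hc0 : c 0 = fun _ => (0 : ℝ))
    (L : ℝ) (hL : 0 < L)
    (hconv : ∀ t, 1 ≤ t → t ≤ T → ConvexOn ℝ Set.univ (c t))
    (hdiff : ∀ t, 1 ≤ t → t ≤ T → Differentiable ℝ (c t))
    (hlip : ∀ t, 1 ≤ t → t ≤ T → ∀ u ∈ P, ∀ v ∈ P,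
      ‖gradient (c t) u - gradient (c t) v‖ ≤ L * ‖u - v‖)
    (η : ℝ) (hη0 : 0 < η) (hη1 : η ≤ 1 / 2)
    (x z : ℕ → Euc d) (hz0 : z 0 = 0)
    (hx : ∀ t, 1 ≤ t → t ≤ T → x t ∈ P ∧
      IsMinOn (fun u => ⟪gradient (c (t - 1)) (z (t - 1)), u⟫
        + L / (2 * η) * ‖u - z (t - 1)‖ ^ 2) P (x t))
    (hz : ∀ t, 1 ≤ t → t ≤ T → z t ∈ P ∧
      IsMinOn (fun u => ⟪gradient (c t) (x t), u⟫
        + L / (2 * η) * ‖u - z (t - 1)‖ ^ 2) P (z t)) :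
    ∀ t, 1 ≤ t → t ≤ T → ∀ w ∈ P,
      η / L * (c t (x t) - c t w)
        ≤ 1 / 2 * (‖w - z (t - 1)‖ ^ 2 - ‖w - z t‖ ^ 2)
          + 2 * η ^ 2 / L ^ 2 *
            ‖gradient (c t) (z (t - 1)) - gradient (c (t - 1)) (z (t - 1))‖ ^ 2 := by
  intro t ht1 htT w hw
  set γ : ℝ := L / (2 * η) with hγdef
  have hγ : (0 : ℝ) < γ := by rw [hγdef]; positivity
  obtain ⟨haP, hxmin⟩ := hx t ht1 htT
  obtain ⟨hmP, hzmin⟩ := hz t ht1 htT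
  have hpP : z (t - 1) ∈ P := by
    rcases eq_or_lt_of_le ht1 with h | h
    · have ht0 : t - 1 = 0 := by omega
      rw [ht0, hz0]; exact h0P
    · exact (hz (t - 1) (by omega) (by omega)).1
  -- variational inequalities from the two prox steps
  have keyz := prox_min_key hPconv (gradient (c t) (x t)) (z (t - 1)) (z t) hmP γ hγ hzmin w hw
  have keyx := prox_min_key hPconv (gradient (c (t - 1)) (z (t - 1))) (z (t - 1)) (x t) haP γ hγ
    hxmin (z t) hmP
  -- gradient inequality from convexity
  have hgrad := grad_convex_ineq (c t) (hconv t ht1 htT) (hdiff t ht1 htT) (x t) w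
  have hgrad' : c t (x t) - c t w
      ≤ ⟪gradient (c t) (x t), x t⟫ - ⟪gradient (c t) (x t), w⟫ := by
    rw [inner_sub_right] at hgrad; linarith
  -- Lipschitz bound
  have hlipt := hlip t ht1 htT (x t) haP (z (t - 1)) hpP
  have htri : ‖gradient (c t) (x t) - gradient (c (t - 1)) (z (t - 1))‖
      ≤ L * ‖x t - z (t - 1)‖
        + ‖gradient (c t) (z (t - 1)) - gradient (c (t - 1)) (z (t - 1))‖ := by
    have h3 := dist_triangle (gradient (c t) (x t)) (gradient (c t) (z (t - 1)))
      (gradient (c (t - 1)) (z (t - 1)))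
    rw [dist_eq_norm, dist_eq_norm, dist_eq_norm] at h3
    linarith
  have hG2 : ‖gradient (c t) (x t) - gradient (c (t - 1)) (z (t - 1))‖ ^ 2
      ≤ 2 * L ^ 2 * ‖x t - z (t - 1)‖ ^ 2
        + 2 * ‖gradient (c t) (z (t - 1)) - gradient (c (t - 1)) (z (t - 1))‖ ^ 2 := by
    nlinarith [htri, norm_nonneg (gradient (c t) (x t) - gradient (c (t - 1)) (z (t - 1))),
      norm_nonneg (x t - z (t - 1)),
      norm_nonneg (gradient (c t) (z (t - 1)) - gradient (c (t - 1)) (z (t - 1))),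
      sq_nonneg (L * ‖x t - z (t - 1)‖
        - ‖gradient (c t) (z (t - 1)) - gradient (c (t - 1)) (z (t - 1))‖),
      mul_nonneg hL.le (norm_nonneg (x t - z (t - 1)))]
  -- Cauchy-Schwarz
  have hCS : ⟪gradient (c t) (x t) - gradient (c (t - 1)) (z (t - 1)), x t - z t⟫
      ≤ ‖gradient (c t) (x t) - gradient (c (t - 1)) (z (t - 1))‖ * ‖z t - x t‖ := by
    rw [norm_sub_rev (z t) (x t)]
    exact real_inner_le_norm _ _
  -- decomposition of the inner product
  have hdecomp : ⟪gradient (c t) (x t), x t⟫ - ⟪gradient (c t) (x t), w⟫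
      = ⟪gradient (c t) (x t) - gradient (c (t - 1)) (z (t - 1)), x t - z t⟫
        + (⟪gradient (c (t - 1)) (z (t - 1)), x t⟫ - ⟪gradient (c (t - 1)) (z (t - 1)), z t⟫)
        + (⟪gradient (c t) (x t), z t⟫ - ⟪gradient (c t) (x t), w⟫) := by
    simp only [inner_sub_left, inner_sub_right]
    ring
  -- base inequality
  have base : c t (x t) - c t w
      ≤ ⟪gradient (c t) (x t) - gradient (c (t - 1)) (z (t - 1)), x t - z t⟫
        + γ * (‖w - z (t - 1)‖ ^ 2 - ‖w - z t‖ ^ 2)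
        - γ * ‖z t - x t‖ ^ 2 - γ * ‖x t - z (t - 1)‖ ^ 2 := by
    linarith [keyz, keyx, hgrad', hdecomp.le, hdecomp.ge]
  have hL2 : L ^ 2 ≤ 2 * γ ^ 2 := by
    have he : 2 * γ ^ 2 = L ^ 2 / (2 * η ^ 2) := by
      rw [hγdef]; field_simp
    rw [he, le_div_iff₀ (by positivity)]
    nlinarith [sq_nonneg L, mul_nonneg hη0.le (by linarith : (0:ℝ) ≤ 1 / 2 - η)]
  have M : 4 * γ * (c t (x t) - c t w)
      ≤ 4 * γ ^ 2 * (‖w - z (t - 1)‖ ^ 2 - ‖w - z t‖ ^ 2)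
        + 2 * ‖gradient (c t) (z (t - 1)) - gradient (c (t - 1)) (z (t - 1))‖ ^ 2 := by
    have hb := mul_le_mul_of_nonneg_left base (by positivity : (0:ℝ) ≤ 4 * γ)
    have hc := mul_le_mul_of_nonneg_left hCS (by positivity : (0:ℝ) ≤ 4 * γ)
    nlinarith [hb, hc, hG2, hL2,
      sq_nonneg (‖gradient (c t) (x t) - gradient (c (t - 1)) (z (t - 1))‖
        - 2 * γ * ‖z t - x t‖),
      sq_nonneg ‖x t - z (t - 1)‖, hγ]
  have hfin := mul_le_mul_of_nonneg_left M (by positivity : (0:ℝ) ≤ 1 / (8 * γ ^ 2))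
  have hLne : L ≠ 0 := ne_of_gt hL
  have hηne : η ≠ 0 := ne_of_gt hη0
  calc η / L * (c t (x t) - c t w)
      = 1 / (8 * γ ^ 2) * (4 * γ * (c t (x t) - c t w)) := by
        rw [hγdef]; field_simp; ring
    _ ≤ 1 / (8 * γ ^ 2) * (4 * γ ^ 2 * (‖w - z (t - 1)‖ ^ 2 - ‖w - z t‖ ^ 2)
          + 2 * ‖gradient (c t) (z (t - 1)) - gradient (c (t - 1)) (z (t - 1))‖ ^ 2) := hfin
    _ = 1 / 2 * (‖w - z (t - 1)‖ ^ 2 - ‖w - z t‖ ^ 2)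
          + η ^ 2 / L ^ 2 *
            ‖gradient (c t) (z (t - 1)) - gradient (c (t - 1)) (z (t - 1))‖ ^ 2 := by
        rw [hγdef]; field_simp; ring
    _ ≤ 1 / 2 * (‖w - z (t - 1)‖ ^ 2 - ‖w - z t‖ ^ 2)
          + 2 * η ^ 2 / L ^ 2 *
            ‖gradient (c t) (z (t - 1)) - gradient (c (t - 1)) (z (t - 1))‖ ^ 2 := by
        have h0 : 0 ≤ η ^ 2 / L ^ 2 *
            ‖gradient (c t) (z (t - 1)) - gradient (c (t - 1)) (z (t - 1))‖ ^ 2 := by positivity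
        have h1 : 2 * η ^ 2 / L ^ 2 *
              ‖gradient (c t) (z (t - 1)) - gradient (c (t - 1)) (z (t - 1))‖ ^ 2
            = η ^ 2 / L ^ 2 *
                ‖gradient (c t) (z (t - 1)) - gradient (c (t - 1)) (z (t - 1))‖ ^ 2
              + η ^ 2 / L ^ 2 *
                ‖gradient (c t) (z (t - 1)) - gradient (c (t - 1)) (z (t - 1))‖ ^ 2 := by ring
        linarith
end

section
/- Under the prox-method updates with step size η ∈ (0, 1/2], the regret satisfies ∑_{t=1}^T c_t(x_t) − min_{x∈𝒫} ∑_{t=1}^T c_t(x) ≤ L/(2η) + (2η/L) ∑_{t=0}^{T−1} ‖∇c_{t+1}(z_t) − ∇c_t(z_t)‖₂². -/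
open Finset
open scoped RealInnerProductSpace

/-- Directional derivative via gradient. -/
lemma grad_dirDeriv {d : ℕ} {f : Euc d → ℝ} {a : Euc d} (hd : DifferentiableAt ℝ f a)
    (w : Euc d) : HasDerivAt (fun s : ℝ => f (a + s • w)) ⟪gradient f a, w⟫ 0 := by
  have h1 : HasFDerivAt f (InnerProductSpace.toDual ℝ (Euc d) (gradient f a)) a :=
    hd.hasGradientAt.hasFDerivAt
  have h2 : HasDerivAt (fun s : ℝ => a + s • w) w 0 := by
    simpa using ((hasDerivAt_id (0 : ℝ)).smul_const w).const_add a
  have h1' : HasFDerivAt f (InnerProductSpace.toDual ℝ (Euc d) (gradient f a))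
      (a + (0 : ℝ) • w) := by simpa using h1
  have := h1'.comp_hasDerivAt 0 h2
  simpa [InnerProductSpace.toDual_apply_apply, Function.comp_def] using this

/-- First order condition for a differentiable convex function on `univ`. -/
lemma convexOn_grad_le {d : ℕ} {f : Euc d → ℝ} (hf : ConvexOn ℝ Set.univ f)
    (hd : Differentiable ℝ f) (a b : Euc d) :
    f a + ⟪gradient f a, b - a⟫ ≤ f b := by
  have hφconv : ConvexOn ℝ Set.univ (fun s : ℝ => f (a + s • (b - a))) := by
    have h := hf.comp_affineMap (AffineMap.lineMap a b)
    have heq : (f ∘ (AffineMap.lineMap a b : ℝ →ᵃ[ℝ] Euc d)) =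
        fun s : ℝ => f (a + s • (b - a)) := by
      funext s
      simp [AffineMap.lineMap_apply, vsub_eq_sub, vadd_eq_add, add_comm]
    have hpre : ((AffineMap.lineMap a b : ℝ →ᵃ[ℝ] Euc d)) ⁻¹' Set.univ = Set.univ := by simp
    rw [hpre, heq] at h
    exact h
  have hder : HasDerivAt (fun s : ℝ => f (a + s • (b - a))) ⟪gradient f a, b - a⟫ 0 :=
    grad_dirDeriv (hd a) (b - a)
  have hslope := hφconv.le_slope_of_hasDerivAt (Set.mem_univ 0) (Set.mem_univ 1)
    one_pos hder
  rw [slope_def_field] at hslope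
  simp only [zero_smul, add_zero, one_smul] at hslope
  have : a + (b - a) = b := by abel
  rw [this] at hslope
  have h10 : (1 : ℝ) - 0 = 1 := by norm_num
  rw [h10, div_one] at hslope
  linarith

/-- Optimality condition for the prox step. -/
lemma prox_opt {d : ℕ} {P : Set (Euc d)} (hP : Convex ℝ P) (g z₀ : Euc d) {γ : ℝ}
    (hγ : 0 < γ) {z : Euc d} (hzP : z ∈ P)
    (hmin : IsMinOn (fun u => ⟪g, u⟫ + γ * ‖u - z₀‖ ^ 2) P z)
    (u : Euc d) (hu : u ∈ P) :
    ⟪g, z - u⟫ ≤ γ * (‖u - z₀‖ ^ 2 - ‖u - z‖ ^ 2 - ‖z - z₀‖ ^ 2) := by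
  set w : Euc d := u - z with hw
  -- first order condition
  have hA : 0 ≤ ⟪g, w⟫ + 2 * γ * ⟪z - z₀, w⟫ := by
    have key : ∀ s : ℝ, 0 < s → s ≤ 1 →
        -(γ * s * ‖w‖ ^ 2) ≤ ⟪g, w⟫ + 2 * γ * ⟪z - z₀, w⟫ := by
      intro s hs0 hs1
      have hmem : z + s • w ∈ P := hP.add_smul_sub_mem hzP hu ⟨hs0.le, hs1⟩
      have hle := isMinOn_iff.mp hmin _ hmem
      have hexp : z + s • w - z₀ = (z - z₀) + s • w := by abel
      rw [hexp, norm_add_sq_real] at hle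
      rw [inner_add_right, inner_smul_right, real_inner_smul_right, norm_smul,
        Real.norm_eq_abs, abs_of_pos hs0, mul_pow] at hle
      have h1 : 0 ≤ s * (⟪g, w⟫ + 2 * γ * ⟪z - z₀, w⟫) + γ * (s ^ 2 * ‖w‖ ^ 2) := by
        nlinarith [hle]
      have h2 : -(γ * s * ‖w‖ ^ 2) * s ≤ (⟪g, w⟫ + 2 * γ * ⟪z - z₀, w⟫) * s := by
        nlinarith [h1]
      exact le_of_mul_le_mul_right (by linarith [h2]) hs0
    by_contra hcon
    push_neg at hcon
    set A := ⟪g, w⟫ + 2 * γ * ⟪z - z₀, w⟫ with hAdef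
    have hAneg : A < 0 := hcon
    set s : ℝ := min 1 (-A / (γ * ‖w‖ ^ 2 + 1)) with hs
    have hden : 0 < γ * ‖w‖ ^ 2 + 1 := by positivity
    have hs0 : 0 < s := lt_min one_pos (div_pos (by linarith) hden)
    have hs1 : s ≤ 1 := min_le_left _ _
    have hk := key s hs0 hs1
    have hsle : s ≤ -A / (γ * ‖w‖ ^ 2 + 1) := min_le_right _ _
    have : γ * s * ‖w‖ ^ 2 < -A := by
      have h1 : s * (γ * ‖w‖ ^ 2 + 1) ≤ -A := by
        rw [← le_div_iff₀ hden]; exact hsle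
      nlinarith [hs0]
    linarith
  -- the inner product identity
  have hid : ‖u - z₀‖ ^ 2 = ‖w‖ ^ 2 + 2 * ⟪w, z - z₀⟫ + ‖z - z₀‖ ^ 2 := by
    have : u - z₀ = w + (z - z₀) := by rw [hw]; abel
    rw [this, norm_add_sq_real]
  have hwu : ⟪g, z - u⟫ = -⟪g, w⟫ := by
    rw [hw, ← inner_neg_right]; congr 1; abel
  have hsymm : ⟪z - z₀, w⟫ = ⟪w, z - z₀⟫ := real_inner_comm _ _
  have hnn : ‖u - z‖ ^ 2 = ‖w‖ ^ 2 := by rw [hw]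
  rw [hwu, hid, hnn]
  nlinarith [hA, hsymm]

/-- Pure real arithmetic for the per-step bound. -/
lemma prox_arith {γ L η A B δ : ℝ} (hL : 0 < L) (hη : 0 < η)
    (hγdef : γ = L / (2 * η)) (hLγ : L ≤ γ) (hA0 : 0 ≤ A) (hB0 : 0 ≤ B) (hδ0 : 0 ≤ δ) :
    (L * A + δ) * B - γ * B ^ 2 - γ * A ^ 2 ≤ η / L * δ ^ 2 := by
  have hγ : 0 < γ := hγdef ▸ by positivity
  have h2 : 2 * γ * ((L * A + δ) * B - γ * B ^ 2 - γ * A ^ 2) ≤ δ ^ 2 := by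
    nlinarith [sq_nonneg (γ * A - γ * B), sq_nonneg (γ * B - δ), sq_nonneg (γ * A),
      mul_nonneg (mul_nonneg hγ.le (mul_nonneg hA0 hB0)) (sub_nonneg.2 hLγ)]
  have heq : η / L * δ ^ 2 = δ ^ 2 / (2 * γ) := by
    rw [hγdef]; field_simp
  rw [heq, le_div_iff₀ (by positivity)]
  nlinarith [h2]

set_option maxHeartbeats 1000000 in
/-- Regret bound for the prox method with step size `η ∈ (0, 1/2]`. -/
theorem prox_regret_bound {d T : ℕ} (hT : 1 ≤ T)
    (P : Set (Euc d)) (hPconv : Convex ℝ P) (hPcl : IsClosed P)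
    (hPball : P ⊆ Metric.closedBall 0 1) (h0P : (0 : Euc d) ∈ P)
    (c : ℕ → Euc d → ℝ) (hc0 : c 0 = fun _ => (0 : ℝ))
    (L : ℝ) (hL : 0 < L)
    (hconv : ∀ t, 1 ≤ t → t ≤ T → ConvexOn ℝ Set.univ (c t))
    (hdiff : ∀ t, 1 ≤ t → t ≤ T → Differentiable ℝ (c t))
    (hlip : ∀ t, 1 ≤ t → t ≤ T → ∀ u ∈ P, ∀ v ∈ P,
      ‖gradient (c t) u - gradient (c t) v‖ ≤ L * ‖u - v‖)
    (η : ℝ) (hη0 : 0 < η) (hη1 : η ≤ 1 / 2)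
    (x z : ℕ → Euc d) (hz0 : z 0 = 0)
    (hx : ∀ t, 1 ≤ t → t ≤ T → x t ∈ P ∧
      IsMinOn (fun u => ⟪gradient (c (t - 1)) (z (t - 1)), u⟫
        + L / (2 * η) * ‖u - z (t - 1)‖ ^ 2) P (x t))
    (hz : ∀ t, 1 ≤ t → t ≤ T → z t ∈ P ∧
      IsMinOn (fun u => ⟪gradient (c t) (x t), u⟫
        + L / (2 * η) * ‖u - z (t - 1)‖ ^ 2) P (z t))
    (xstar : Euc d) (hxstar : xstar ∈ P)
    (hmin : IsMinOn (fun u => ∑ t ∈ Finset.Icc 1 T, c t u) P xstar) :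
    (∑ t ∈ Finset.Icc 1 T, c t (x t)) - (∑ t ∈ Finset.Icc 1 T, c t xstar)
      ≤ L / (2 * η) + 2 * η / L *
        ∑ t ∈ Finset.range T, ‖gradient (c (t + 1)) (z t) - gradient (c t) (z t)‖ ^ 2 := by
  set γ : ℝ := L / (2 * η) with hγdef
  have hγ : 0 < γ := hγdef ▸ by positivity
  have hLγ : L ≤ γ := by
    rw [hγdef, le_div_iff₀ (by positivity)]
    nlinarith
  clear_value γ
  have hzP : ∀ s, s ≤ T → z s ∈ P := by
    intro s hs
    rcases Nat.eq_zero_or_pos s with rfl | hs1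
    · rw [hz0]; exact h0P
    · exact (hz s hs1 hs).1
  -- per-step bound
  have key : ∀ i ∈ Finset.range T,
      c (i + 1) (x (i + 1)) - c (i + 1) xstar ≤
        γ * (‖xstar - z i‖ ^ 2 - ‖xstar - z (i + 1)‖ ^ 2)
        + η / L * ‖gradient (c (i + 1)) (z i) - gradient (c i) (z i)‖ ^ 2 := by
    intro i hi
    rw [Finset.mem_range] at hi
    set t := i + 1 with ht
    have ht1 : 1 ≤ t := Nat.le_add_left 1 i
    have htT : t ≤ T := hi
    have htm : t - 1 = i := by simp [ht]
    obtain ⟨hxP, hxmin⟩ := hx t ht1 htT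
    obtain ⟨hztP, hzmin⟩ := hz t ht1 htT
    rw [htm] at hxmin hzmin
    have hziP : z i ∈ P := hzP i (le_trans (Nat.le_succ i) htT)
    set g := gradient (c t) (x t) with hg
    set gp := gradient (c i) (z i) with hgp
    set δ := ‖gradient (c t) (z i) - gp‖ with hδ
    set A := ‖x t - z i‖ with hA
    set B := ‖x t - z t‖ with hB
    set C := ‖z t - z i‖ with hC
    have hA0 : 0 ≤ A := norm_nonneg _
    have hB0 : 0 ≤ B := norm_nonneg _
    have hδ0 : 0 ≤ δ := norm_nonneg _
    -- convexity
    have hcv := convexOn_grad_le (hconv t ht1 htT) (hdiff t ht1 htT) (x t) xstar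
    have hcveq : ⟪g, xstar - x t⟫ = -⟪g, x t - xstar⟫ := by
      rw [← inner_neg_right]; congr 1; abel
    have hcv' : c t (x t) - c t xstar ≤ ⟪g, x t - xstar⟫ := by
      rw [hcveq] at hcv; linarith
    -- prox optimality for the z-step
    have hii := prox_opt hPconv g (z i) hγ hztP hzmin xstar hxstar
    -- prox optimality for the x-step
    have hiii := prox_opt hPconv gp (z i) hγ hxP hxmin (z t) hztP
    rw [← hC] at hii hiii
    have hxz : ‖z t - x t‖ = B := by rw [hB, norm_sub_rev]
    rw [hxz, ← hA] at hiii
    -- decomposition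
    have hdecomp : ⟪g, x t - xstar⟫
        = ⟪g - gp, x t - z t⟫ + ⟪gp, x t - z t⟫ + ⟪g, z t - xstar⟫ := by
      simp only [inner_sub_left, inner_sub_right]; ring
    -- Cauchy-Schwarz
    have hCS : ⟪g - gp, x t - z t⟫ ≤ ‖g - gp‖ * B :=
      real_inner_le_norm _ _
    -- gradient difference bound
    have hgbd : ‖g - gp‖ ≤ L * A + δ := by
      have hsplit : g - gp = (g - gradient (c t) (z i)) + (gradient (c t) (z i) - gp) := by
        abel
      calc ‖g - gp‖ ≤ ‖g - gradient (c t) (z i)‖ + δ := by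
            rw [hsplit]; exact norm_add_le _ _
        _ ≤ L * A + δ := by
            have := hlip t ht1 htT (x t) hxP (z i) hziP
            linarith
    have hCS' : ⟪g - gp, x t - z t⟫ ≤ (L * A + δ) * B := by
      calc ⟪g - gp, x t - z t⟫ ≤ ‖g - gp‖ * B := hCS
        _ ≤ (L * A + δ) * B := by nlinarith [hgbd, hB0]
    -- arithmetic
    have harith : (L * A + δ) * B - γ * B ^ 2 - γ * A ^ 2 ≤ η / L * δ ^ 2 :=
      prox_arith hL hη0 hγdef hLγ hA0 hB0 hδ0
    linarith [hcv', hdecomp, hCS', hii, hiii, harith]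
  -- summation
  have hsum := Finset.sum_le_sum key
  have hLHS : (∑ t ∈ Finset.Icc 1 T, c t (x t)) - ∑ t ∈ Finset.Icc 1 T, c t xstar
      = ∑ i ∈ Finset.range T, (c (i + 1) (x (i + 1)) - c (i + 1) xstar) := by
    rw [Finset.sum_sub_distrib]
    congr 1 <;>
    · rw [← Finset.Ico_add_one_right_eq_Icc, Finset.sum_Ico_eq_sum_range]
      exact Finset.sum_congr (by norm_num) fun i _ => by rw [add_comm]
  have hRHS : ∑ i ∈ Finset.range T,
      (γ * (‖xstar - z i‖ ^ 2 - ‖xstar - z (i + 1)‖ ^ 2)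
        + η / L * ‖gradient (c (i + 1)) (z i) - gradient (c i) (z i)‖ ^ 2)
      = γ * (‖xstar - z 0‖ ^ 2 - ‖xstar - z T‖ ^ 2)
        + η / L * ∑ i ∈ Finset.range T,
            ‖gradient (c (i + 1)) (z i) - gradient (c i) (z i)‖ ^ 2 := by
    rw [Finset.sum_add_distrib, ← Finset.mul_sum, ← Finset.mul_sum,
      Finset.sum_range_sub' (fun s => ‖xstar - z s‖ ^ 2)]
  rw [hRHS] at hsum
  rw [hLHS]
  have hW0 : ‖xstar - z 0‖ ^ 2 ≤ 1 := by
    rw [hz0, sub_zero]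
    have h1 : ‖xstar‖ ≤ 1 := mem_closedBall_zero_iff.mp (hPball hxstar)
    nlinarith [norm_nonneg xstar]
  have hWT : 0 ≤ ‖xstar - z T‖ ^ 2 := sq_nonneg _
  have hS : 0 ≤ ∑ i ∈ Finset.range T,
      ‖gradient (c (i + 1)) (z i) - gradient (c i) (z i)‖ ^ 2 :=
    Finset.sum_nonneg fun i _ => sq_nonneg _
  have hηL : η / L ≤ 2 * η / L := by
    rw [div_le_div_iff₀ hL hL]; nlinarith
  have h1 : γ * (‖xstar - z 0‖ ^ 2 - ‖xstar - z T‖ ^ 2) ≤ γ := by nlinarith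
  have h2 : η / L * (∑ i ∈ Finset.range T,
        ‖gradient (c (i + 1)) (z i) - gradient (c i) (z i)‖ ^ 2)
      ≤ 2 * η / L * ∑ i ∈ Finset.range T,
        ‖gradient (c (i + 1)) (z i) - gradient (c i) (z i)‖ ^ 2 := by
    nlinarith
  linarith [hsum, h1, h2]
end

section
/- (Theorem 2) Suppose EVAR > 0 and the step size is η = (1/2)·min{1, L/√EVAR}, where EVAR = ∑_{t=0}^{T−1} ‖∇c_{t+1}(z_t) − ∇c_t(z_t)‖₂² is the extended sequential variation of the run. Then the prox method satisfies ∑_{t=1}^T c_t(x_t) − min_{x∈𝒫} ∑_{t=1}^T c_t(x) ≤ 2·max(L, √EVAR). -/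
set_option maxHeartbeats 1000000
open Finset
open scoped RealInnerProductSpace

lemma grad_ineq {F : Type*} [NormedAddCommGroup F] [InnerProductSpace ℝ F] [CompleteSpace F]
    {f : F → ℝ} (hc : ConvexOn ℝ Set.univ f) (hd : Differentiable ℝ f)
    (x y : F) : f x + ⟪gradient f x, y - x⟫ ≤ f y := by
  have hγ : ∀ s : ℝ, HasDerivAt (fun s : ℝ => x + s • (y - x)) (y - x) s := by
    intro s
    simpa using ((hasDerivAt_id s).smul_const (y - x)).const_add x
  have hder : HasDerivAt (fun s : ℝ => f (x + s • (y - x))) (⟪gradient f x, y - x⟫) 0 := by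
    have h1 : HasFDerivAt f (InnerProductSpace.toDual ℝ F (gradient f x)) (x + (0:ℝ) • (y - x)) := by
      simpa using ((hd x).hasGradientAt).hasFDerivAt
    have := h1.comp_hasDerivAt 0 (hγ 0)
    simpa [Function.comp_def] using this
  have hconv : ConvexOn ℝ Set.univ (fun s : ℝ => f (x + s • (y - x))) := by
    have h := hc.comp_affineMap (AffineMap.lineMap x y)
    simp only [Set.preimage_univ] at h
    have he : (fun s : ℝ => f (x + s • (y - x))) = f ∘ (AffineMap.lineMap x y) := by
      funext s
      simp [AffineMap.lineMap_apply, add_comm]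
    rw [he]
    exact h
  have := hconv.le_slope_of_hasDerivAt (Set.mem_univ 0) (Set.mem_univ 1) one_pos hder
  rw [slope_def_field] at this
  simp at this
  have hg : ⟪gradient f x, y - x⟫ = fderiv ℝ f x y - fderiv ℝ f x x := by
    simp [gradient, inner_sub_right]
  linarith [this]

lemma quad_min {F : Type*} [NormedAddCommGroup F] [InnerProductSpace ℝ F]
    {P : Set F} (hP : Convex ℝ P) {β : ℝ} (hβ : 0 < β) (g zz : F) {w : F} (hw : w ∈ P)
    (hmin : IsMinOn (fun u => ⟪g, u⟫ + β * ‖u - zz‖ ^ 2) P w)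
    (u : F) (hu : u ∈ P) :
    ⟪g, w⟫ + β * ‖w - zz‖ ^ 2 + β * ‖u - w‖ ^ 2 ≤ ⟪g, u⟫ + β * ‖u - zz‖ ^ 2 := by
  set D : ℝ := ⟪g, u - w⟫ + 2 * β * ⟪w - zz, u - w⟫ with hD
  set M : ℝ := ‖u - w‖ ^ 2 with hM
  have hexp : ∀ s : ℝ, ⟪g, w + s • (u - w)⟫ + β * ‖w + s • (u - w) - zz‖ ^ 2
      = (⟪g, w⟫ + β * ‖w - zz‖ ^ 2) + s * D + s ^ 2 * (β * M) := by
    intro s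
    have h1 : w + s • (u - w) - zz = (w - zz) + s • (u - w) := by abel
    rw [h1, inner_add_right, real_inner_smul_right, norm_add_sq_real,
      real_inner_smul_right, norm_smul, Real.norm_eq_abs, mul_pow, sq_abs]
    simp only [hD, hM]
    ring
  have hmem : ∀ s : ℝ, 0 ≤ s → s ≤ 1 → w + s • (u - w) ∈ P := by
    intro s h0 h1
    have := hP hw hu (by linarith : (0:ℝ) ≤ 1 - s) h0 (by ring)
    convert this using 1
    module
  have hDpos : 0 ≤ D := by
    by_contra hDneg
    push_neg at hDneg
    have hMpos : 0 < M := by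
      rcases eq_or_lt_of_le (by positivity : (0:ℝ) ≤ M) with h | h
      · exfalso
        have : u - w = 0 := by
          have := h.symm
          simpa [hM, pow_eq_zero_iff] using this
        rw [hD, this] at hDneg
        simp at hDneg
      · exact h
    set s : ℝ := min 1 (-D / (2 * (β * M))) with hs
    have hspos : 0 < s := by
      apply lt_min one_pos
      apply div_pos (by linarith) (by positivity)
    have hsle : s ≤ 1 := min_le_left _ _
    have hkey := hmin (hmem s hspos.le hsle)
    simp only [Set.mem_setOf_eq] at hkey
    rw [hexp s] at hkey
    have hsle2 : s ≤ -D / (2 * (β * M)) := min_le_right _ _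
    have h2 : s ^ 2 * (β * M) ≤ s * (-D / 2) := by
      have hcalc : s * (β * M) ≤ -D / 2 := by
        calc s * (β * M) ≤ (-D / (2 * (β * M))) * (β * M) :=
              mul_le_mul_of_nonneg_right hsle2 (by positivity)
          _ = -D / 2 := by field_simp
      calc s ^ 2 * (β * M) = s * (s * (β * M)) := by ring
        _ ≤ s * (-D / 2) := mul_le_mul_of_nonneg_left hcalc hspos.le
    nlinarith [hkey, h2, mul_pos hspos (neg_pos.mpr hDneg)]
  have h1 := hexp 1
  simp only [one_smul, one_pow, one_mul] at h1
  have h2 : w + (u - w) = u := by abel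
  rw [h2] at h1
  rw [h1]
  nlinarith [hDpos, real_inner_self_nonneg (x := u - w)]

lemma young' {a b L η : ℝ} (hL : 0 < L) (hη : 0 < η) :
    a * b ≤ η / (2 * L) * a ^ 2 + L / (2 * η) * b ^ 2 := by
  rw [← sub_nonneg]
  have h : η / (2 * L) * a ^ 2 + L / (2 * η) * b ^ 2 - a * b
      = (η * a - L * b) ^ 2 / (2 * L * η) := by
    field_simp
    ring
  rw [h]
  positivity

/-- Theorem 2: regret bound of the prox method with the tuned step size
`η = (1/2)·min{1, L/√EVAR}`, where `EVAR` is the extended sequential variation of the run. -/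
theorem prox_theorem_two {d T : ℕ} (hT : 1 ≤ T)
    (P : Set (Euc d)) (hPconv : Convex ℝ P) (hPcl : IsClosed P)
    (hPball : P ⊆ Metric.closedBall 0 1) (h0P : (0 : Euc d) ∈ P)
    (c : ℕ → Euc d → ℝ) (hc0 : c 0 = fun _ => (0 : ℝ))
    (L : ℝ) (hL : 0 < L)
    (hconv : ∀ t, 1 ≤ t → t ≤ T → ConvexOn ℝ Set.univ (c t))
    (hdiff : ∀ t, 1 ≤ t → t ≤ T → Differentiable ℝ (c t))
    (hlip : ∀ t, 1 ≤ t → t ≤ T → ∀ u ∈ P, ∀ v ∈ P,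
      ‖gradient (c t) u - gradient (c t) v‖ ≤ L * ‖u - v‖)
    (x z : ℕ → Euc d) (hz0 : z 0 = 0)
    (V : ℝ)
    (hV : V = ∑ t ∈ Finset.range T, ‖gradient (c (t + 1)) (z t) - gradient (c t) (z t)‖ ^ 2)
    (hVpos : 0 < V)
    (η : ℝ) (hηdef : η = 1 / 2 * min 1 (L / Real.sqrt V))
    (hx : ∀ t, 1 ≤ t → t ≤ T → x t ∈ P ∧
      IsMinOn (fun u => ⟪gradient (c (t - 1)) (z (t - 1)), u⟫
        + L / (2 * η) * ‖u - z (t - 1)‖ ^ 2) P (x t))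
    (hz : ∀ t, 1 ≤ t → t ≤ T → z t ∈ P ∧
      IsMinOn (fun u => ⟪gradient (c t) (x t), u⟫
        + L / (2 * η) * ‖u - z (t - 1)‖ ^ 2) P (z t))
    (xstar : Euc d) (hxstar : xstar ∈ P)
    (hmin : IsMinOn (fun u => ∑ t ∈ Finset.Icc 1 T, c t u) P xstar) :
    (∑ t ∈ Finset.Icc 1 T, c t (x t)) - (∑ t ∈ Finset.Icc 1 T, c t xstar)
      ≤ 2 * max L (Real.sqrt V) := by
  have hsV : 0 < Real.sqrt V := Real.sqrt_pos.mpr hVpos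
  have hVs : Real.sqrt V ^ 2 = V := Real.sq_sqrt hVpos.le
  have hη0 : 0 < η := by
    rw [hηdef]
    have : 0 < min 1 (L / Real.sqrt V) := lt_min one_pos (by positivity)
    linarith
  have hη1 : η ≤ 1 / 2 := by
    rw [hηdef]
    have := min_le_left 1 (L / Real.sqrt V)
    linarith
  have hLη : L * η ≤ L / (2 * η) := by
    rw [le_div_iff₀ (by positivity)]
    have hη2 : η * η ≤ 1 / 4 := by nlinarith
    nlinarith [mul_le_mul_of_nonneg_left hη2 hL.le]
  -- per-step inequality
  have key : ∀ i ∈ Finset.range T,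
      c (i + 1) (x (i + 1)) - c (i + 1) xstar
        ≤ η / L * ‖gradient (c (i + 1)) (z i) - gradient (c i) (z i)‖ ^ 2
          + L / (2 * η) * (‖xstar - z i‖ ^ 2 - ‖xstar - z (i + 1)‖ ^ 2) := by
    intro i hi
    rw [Finset.mem_range] at hi
    obtain ⟨hxtP, hxmin⟩ := hx (i + 1) (by omega) (by omega)
    obtain ⟨hztP, hzmin⟩ := hz (i + 1) (by omega) (by omega)
    simp only [Nat.add_sub_cancel] at hxmin hzmin
    have hziP : z i ∈ P := by
      rcases Nat.eq_zero_or_pos i with h | h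
      · rw [h, hz0]; exact h0P
      · exact (hz i (by omega) (by omega)).1
    set g := gradient (c (i + 1)) (x (i + 1)) with hg
    set h := gradient (c i) (z i) with hh
    set gz := gradient (c (i + 1)) (z i) with hgz
    have hβ : (0:ℝ) < L / (2 * η) := by positivity
    have hgi := grad_ineq (hconv (i + 1) (by omega) (by omega))
      (hdiff (i + 1) (by omega) (by omega)) (x (i + 1)) xstar
    rw [inner_sub_right] at hgi
    have A1 := quad_min hPconv hβ h (z i) hxtP hxmin (z (i + 1)) hztP
    have A2 := quad_min hPconv hβ g (z i) hztP hzmin xstar hxstar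
    rw [norm_sub_rev (z (i + 1)) (x (i + 1))] at A1
    have hCS : ⟪g - h, x (i + 1) - z (i + 1)⟫ ≤ ‖g - h‖ * ‖x (i + 1) - z (i + 1)‖ :=
      real_inner_le_norm _ _
    have ECS : ⟪g - h, x (i + 1) - z (i + 1)⟫
        = ⟪g, x (i + 1)⟫ - ⟪g, z (i + 1)⟫ - ⟪h, x (i + 1)⟫ + ⟪h, z (i + 1)⟫ := by
      simp [inner_sub_left, inner_sub_right]
      ring
    rw [ECS] at hCS
    have htri : ‖g - h‖ ≤ L * ‖x (i + 1) - z i‖ + ‖gz - h‖ := by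
      have h1 : ‖g - h‖ ≤ ‖g - gz‖ + ‖gz - h‖ := norm_sub_le_norm_sub_add_norm_sub g gz h
      have h2 := hlip (i + 1) (by omega) (by omega) (x (i + 1)) hxtP (z i) hziP
      rw [← hg, ← hgz] at h2
      linarith
    have hsq : ‖g - h‖ ^ 2 ≤ 2 * (L * ‖x (i + 1) - z i‖) ^ 2 + 2 * ‖gz - h‖ ^ 2 := by
      nlinarith [htri, norm_nonneg (g - h), norm_nonneg (gz - h),
        mul_nonneg hL.le (norm_nonneg (x (i + 1) - z i)),
        sq_nonneg (L * ‖x (i + 1) - z i‖ - ‖gz - h‖)]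
    have hYoung : ‖g - h‖ * ‖x (i + 1) - z (i + 1)‖
        ≤ η / (2 * L) * ‖g - h‖ ^ 2 + L / (2 * η) * ‖x (i + 1) - z (i + 1)‖ ^ 2 :=
      young' hL hη0
    have hY2 : η / (2 * L) * ‖g - h‖ ^ 2
        ≤ L * η * ‖x (i + 1) - z i‖ ^ 2 + η / L * ‖gz - h‖ ^ 2 := by
      have hpos : (0:ℝ) ≤ η / (2 * L) := by positivity
      calc η / (2 * L) * ‖g - h‖ ^ 2
          ≤ η / (2 * L) * (2 * (L * ‖x (i + 1) - z i‖) ^ 2 + 2 * ‖gz - h‖ ^ 2) :=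
            mul_le_mul_of_nonneg_left hsq hpos
        _ = L * η * ‖x (i + 1) - z i‖ ^ 2 + η / L * ‖gz - h‖ ^ 2 := by
            field_simp
    have hY3 : L * η * ‖x (i + 1) - z i‖ ^ 2 ≤ L / (2 * η) * ‖x (i + 1) - z i‖ ^ 2 :=
      mul_le_mul_of_nonneg_right hLη (sq_nonneg _)
    linarith [hgi, A1, A2, hCS, hYoung, hY2, hY3]
  -- sum up
  have hsplit : (∑ t ∈ Finset.Icc 1 T, c t (x t)) - (∑ t ∈ Finset.Icc 1 T, c t xstar)
      = ∑ i ∈ Finset.range T, (c (i + 1) (x (i + 1)) - c (i + 1) xstar) := by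
    rw [← Finset.sum_sub_distrib, ← Finset.Ico_add_one_right_eq_Icc, Finset.sum_Ico_eq_sum_range]
    refine Finset.sum_congr (by norm_num) fun i _ => by rw [Nat.add_comm]
  have hsum : (∑ t ∈ Finset.Icc 1 T, c t (x t)) - (∑ t ∈ Finset.Icc 1 T, c t xstar)
      ≤ η / L * V + L / (2 * η) * (‖xstar - z 0‖ ^ 2 - ‖xstar - z T‖ ^ 2) := by
    rw [hsplit]
    calc ∑ i ∈ Finset.range T, (c (i + 1) (x (i + 1)) - c (i + 1) xstar)
        ≤ ∑ i ∈ Finset.range T,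
            (η / L * ‖gradient (c (i + 1)) (z i) - gradient (c i) (z i)‖ ^ 2
              + L / (2 * η) * (‖xstar - z i‖ ^ 2 - ‖xstar - z (i + 1)‖ ^ 2)) :=
          Finset.sum_le_sum key
      _ = η / L * V + L / (2 * η) * (‖xstar - z 0‖ ^ 2 - ‖xstar - z T‖ ^ 2) := by
          rw [Finset.sum_add_distrib, ← Finset.mul_sum, ← Finset.mul_sum,
            Finset.sum_range_sub' (fun i => ‖xstar - z i‖ ^ 2), ← hV]
  have hD0 : ‖xstar - z 0‖ ^ 2 ≤ 1 := by
    have h1 : ‖xstar‖ ≤ 1 := by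
      have := hPball hxstar
      simpa [Metric.mem_closedBall, dist_eq_norm] using this
    rw [hz0, sub_zero]
    nlinarith [norm_nonneg xstar]
  have hbound : (∑ t ∈ Finset.Icc 1 T, c t (x t)) - (∑ t ∈ Finset.Icc 1 T, c t xstar)
      ≤ η / L * V + L / (2 * η) := by
    have h1 : L / (2 * η) * (‖xstar - z 0‖ ^ 2 - ‖xstar - z T‖ ^ 2) ≤ L / (2 * η) := by
      have h2 : ‖xstar - z 0‖ ^ 2 - ‖xstar - z T‖ ^ 2 ≤ 1 := by
        nlinarith [sq_nonneg ‖xstar - z T‖]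
      nlinarith [div_pos hL (by positivity : (0:ℝ) < 2 * η)]
    linarith [hsum]
  -- final numeric bound
  rcases le_or_gt (L / Real.sqrt V) 1 with hcase | hcase
  · -- η = L / (2 √V)
    have hηeq : η = 1 / 2 * (L / Real.sqrt V) := by rw [hηdef, min_eq_right hcase]
    have e1 : η / L * V = Real.sqrt V / 2 := by
      rw [hηeq]
      field_simp
      nlinarith [hVs]
    have e2 : L / (2 * η) = Real.sqrt V := by
      rw [hηeq]
      field_simp
    have : (∑ t ∈ Finset.Icc 1 T, c t (x t)) - (∑ t ∈ Finset.Icc 1 T, c t xstar)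
        ≤ 3 / 2 * Real.sqrt V := by
      rw [e1, e2] at hbound
      linarith
    have hmax : Real.sqrt V ≤ max L (Real.sqrt V) := le_max_right _ _
    linarith
  · -- η = 1/2
    have hηeq : η = 1 / 2 := by
      rw [hηdef, min_eq_left hcase.le]
      ring
    have hVL : Real.sqrt V ≤ L := le_of_lt ((one_lt_div hsV).mp hcase)
    have hVL2 : V ≤ L ^ 2 := by nlinarith [hVs, hsV]
    have e1 : η / L * V ≤ L / 2 := by
      have he : η / L * V = V / (2 * L) := by rw [hηeq]; ring
      rw [he, div_le_div_iff₀ (by positivity) two_pos]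
      nlinarith
    have e2 : L / (2 * η) = L := by
      rw [hηeq]
      norm_num
    rw [e2] at hbound
    have hmax : L ≤ max L (Real.sqrt V) := le_max_left _ _
    linarith
end

section
/- (Lemma 3.1 of Nemirovski, as used in the paper; Euclidean case) Let U ⊆ ℝ^d be a nonempty closed convex set, z ∈ ℝ^d, γ > 0, and ξ, ζ ∈ ℝ^d. Let x be a minimizer over u ∈ U of γ⟨ξ, u⟩ + (1/2)‖u − z‖₂² and let z₊ be a minimizer over u ∈ U of γ⟨ζ, u⟩ + (1/2)‖u − z‖₂². Then for every u ∈ U: γ⟨ζ, x − u⟩ ≤ (1/2)‖u − z‖₂² − (1/2)‖u − z₊‖₂² + γ²‖ξ − ζ‖₂² − (1/2)(‖x − z‖₂² + ‖x − z₊‖₂²). -/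
open scoped RealInnerProductSpace

lemma vi_aux {d : ℕ} {U : Set (Euc d)} (hUconv : Convex ℝ U) (z ξ : Euc d) (γ : ℝ)
    {x : Euc d} (hxU : x ∈ U)
    (hmin : IsMinOn (fun u => γ * ⟪ξ, u⟫ + 1 / 2 * ‖u - z‖ ^ 2) U x) :
    ∀ u ∈ U, 0 ≤ γ * ⟪ξ, u - x⟫ + ⟪x - z, u - x⟫ := by
  intro u hu
  set A := γ * ⟪ξ, u - x⟫ + ⟪x - z, u - x⟫ with hA
  set B := ‖u - x‖ ^ 2 with hB
  have ht : ∀ t : ℝ, 0 < t → t ≤ 1 → 0 ≤ t * A + t ^ 2 / 2 * B := by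
    intro t ht0 ht1
    have hw : x + t • (u - x) ∈ U := by
      have h := hUconv hxU hu (by linarith : (0:ℝ) ≤ 1 - t) ht0.le (by ring)
      convert h using 1
      module
    have hm := hmin hw
    simp only [Set.mem_setOf_eq] at hm
    have e1 : ⟪ξ, x + t • (u - x)⟫ = ⟪ξ, x⟫ + t * ⟪ξ, u - x⟫ := by
      rw [inner_add_right, real_inner_smul_right]
    have e2 : ‖x + t • (u - x) - z‖ ^ 2
        = ‖x - z‖ ^ 2 + 2 * (t * ⟪x - z, u - x⟫) + t ^ 2 * ‖u - x‖ ^ 2 := by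
      have : x + t • (u - x) - z = (x - z) + t • (u - x) := by abel
      rw [this, norm_add_sq_real, real_inner_smul_right, norm_smul]
      rw [Real.norm_eq_abs, abs_of_pos ht0]
      ring
    rw [e1, e2] at hm
    nlinarith [hm]
  by_contra hcon
  push_neg at hcon
  have hBnn : 0 ≤ B := sq_nonneg _
  rcases eq_or_lt_of_le hBnn with hB0 | hB0
  · have := ht 1 one_pos le_rfl
    nlinarith
  · have htA : 0 < -A / B := div_pos (neg_pos.2 hcon) hB0
    set t := min 1 (-A / B) with htdef
    have ht0 : 0 < t := lt_min one_pos htA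
    have ht1 : t ≤ 1 := min_le_left _ _
    have h2 : t ≤ -A / B := min_le_right _ _
    have htB : t * B ≤ -A := by
      rw [le_div_iff₀ hB0] at h2; linarith
    have := ht t ht0 ht1
    nlinarith

/-- Lemma 3.1 of Nemirovski, Euclidean case. -/
theorem nemirovski_lemma_euclidean {d : ℕ}
    (U : Set (Euc d)) (hUne : U.Nonempty) (hUcl : IsClosed U) (hUconv : Convex ℝ U)
    (z ξ ζ : Euc d) (γ : ℝ) (hγ : 0 < γ)
    (x zp : Euc d) (hxU : x ∈ U) (hzpU : zp ∈ U)
    (hxmin : IsMinOn (fun u => γ * ⟪ξ, u⟫ + 1 / 2 * ‖u - z‖ ^ 2) U x)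
    (hzpmin : IsMinOn (fun u => γ * ⟪ζ, u⟫ + 1 / 2 * ‖u - z‖ ^ 2) U zp) :
    ∀ u ∈ U, γ * ⟪ζ, x - u⟫
      ≤ 1 / 2 * ‖u - z‖ ^ 2 - 1 / 2 * ‖u - zp‖ ^ 2 + γ ^ 2 * ‖ξ - ζ‖ ^ 2
        - 1 / 2 * (‖x - z‖ ^ 2 + ‖x - zp‖ ^ 2) := by
  intro u hu
  have h1 := vi_aux hUconv z ξ γ hxU hxmin
  have h2 := vi_aux hUconv z ζ γ hzpU hzpmin
  have h1zp := h1 zp hzpU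
  have h2x := h2 x hxU
  have h2u := h2 u hu
  -- key: ‖x - zp‖ ≤ γ * ‖ξ - ζ‖
  have hsum : ‖x - zp‖ ^ 2 ≤ γ * ⟪ξ - ζ, zp - x⟫ := by
    have e1 : ⟪ξ - ζ, zp - x⟫ = ⟪ξ, zp - x⟫ - ⟪ζ, zp - x⟫ := by
      rw [inner_sub_left]
    have e2 : ⟪ζ, x - zp⟫ = -⟪ζ, zp - x⟫ := by
      rw [← inner_neg_right]; congr 1; abel
    have e3 : ⟪x - z, zp - x⟫ + ⟪zp - z, x - zp⟫ = -‖x - zp‖ ^ 2 := by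
      have : ⟪zp - z, x - zp⟫ = -⟪zp - z, zp - x⟫ := by
        rw [← inner_neg_right]; congr 1; abel
      rw [this, ← sub_eq_add_neg, ← inner_sub_left]
      have h4 : x - z - (zp - z) = x - zp := by abel
      rw [h4]
      have : ⟪x - zp, zp - x⟫ = -⟪x - zp, x - zp⟫ := by
        rw [← inner_neg_right]; congr 1; abel
      rw [this, real_inner_self_eq_norm_sq]
    nlinarith [h1zp, h2x]
  have hcs1 : ⟪ξ - ζ, zp - x⟫ ≤ ‖ξ - ζ‖ * ‖x - zp‖ := by
    have := real_inner_le_norm (ξ - ζ) (zp - x)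
    rwa [norm_sub_rev zp x] at this
  have hkey : ‖x - zp‖ ≤ γ * ‖ξ - ζ‖ := by
    rcases eq_or_lt_of_le (norm_nonneg (x - zp)) with h0 | h0
    · rw [← h0]; positivity
    · nlinarith [hsum, hcs1]
  -- bound the cross term
  have hcross : γ * ⟪ζ - ξ, x - zp⟫ ≤ γ ^ 2 * ‖ξ - ζ‖ ^ 2 := by
    have hc : ⟪ζ - ξ, x - zp⟫ ≤ ‖ξ - ζ‖ * ‖x - zp‖ := by
      have := real_inner_le_norm (ζ - ξ) (x - zp)
      rwa [norm_sub_rev ζ ξ] at this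
    nlinarith [norm_nonneg (x - zp), norm_nonneg (ξ - ζ)]
  -- decompositions
  have d1 : ⟪ζ, x - u⟫ = ⟪ζ, x - zp⟫ + ⟪ζ, zp - u⟫ := by
    rw [← inner_add_right]; congr 1; abel
  have d2 : ⟪ζ, x - zp⟫ = ⟪ξ, x - zp⟫ + ⟪ζ - ξ, x - zp⟫ := by
    rw [← inner_add_left]; congr 1; abel
  have d3 : ⟪ζ, zp - u⟫ = -⟪ζ, u - zp⟫ := by
    rw [← inner_neg_right]; congr 1; abel
  have d4 : ⟪ξ, x - zp⟫ = -⟪ξ, zp - x⟫ := by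
    rw [← inner_neg_right]; congr 1; abel
  -- norm expansions
  have n1 : ‖u - z‖ ^ 2 = ‖u - zp‖ ^ 2 + 2 * ⟪u - zp, zp - z⟫ + ‖zp - z‖ ^ 2 := by
    have : u - z = (u - zp) + (zp - z) := by abel
    rw [this, norm_add_sq_real]
  have n2 : ‖zp - z‖ ^ 2 = ‖zp - x‖ ^ 2 + 2 * ⟪zp - x, x - z⟫ + ‖x - z‖ ^ 2 := by
    have : zp - z = (zp - x) + (x - z) := by abel
    rw [this, norm_add_sq_real]
  have s1 : ⟪zp - z, u - zp⟫ = ⟪u - zp, zp - z⟫ := real_inner_comm _ _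
  have s2 : ⟪x - z, zp - x⟫ = ⟪zp - x, x - z⟫ := real_inner_comm _ _
  have s3 : ‖zp - x‖ = ‖x - zp‖ := norm_sub_rev _ _
  rw [s3] at n2
  nlinarith [h1zp, h2u, hcross]
end

section
/- (Lemma 2 / Lemma 3.1 of Nemirovski, general norm) Let N be a norm on ℝ^d with dual norm N*(v) = sup{⟨v, x⟩ : N(x) ≤ 1}, let ω : ℝ^d → ℝ be differentiable and α-strongly convex with respect to N (i.e. ω(u) ≥ ω(v) + ⟨∇ω(v), u − v⟩ + (α/2)N(u − v)² for all u, v), and let D(x, z) = ω(x) − ω(z) − ⟨∇ω(z), x − z⟩ be the induced Bregman distance. Let U ⊆ ℝ^d be a nonempty closed convex set, z ∈ ℝ^d, γ > 0, ξ, ζ ∈ ℝ^d. If x minimizes u ↦ γ⟨ξ, u⟩ + D(u, z) over U and z₊ minimizes u ↦ γ⟨ζ, u⟩ + D(u, z) over U, then for every u ∈ U: γ⟨ζ, x − u⟩ ≤ D(u, z) − D(u, z₊) + (γ²/α)·N*(ξ − ζ)² − (α/2)(N(x − z)² + N(x − z₊)²). -/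
open scoped RealInnerProductSpace

/-- Lemma 2 (Lemma 3.1 of Nemirovski), general norm version.
`N` is a norm on `ℝ^d`, `Ns` its dual norm, `ω` a differentiable `α`-strongly convex
function w.r.t. `N`, and `D` the induced Bregman distance. -/
theorem nemirovski_lemma_general {d : ℕ}
    (N : Euc d → ℝ)
    (hNadd : ∀ a b, N (a + b) ≤ N a + N b)
    (hNsmul : ∀ (r : ℝ) (a : Euc d), N (r • a) = |r| * N a)
    (hNdef : ∀ a, N a = 0 → a = 0)
    (Ns : Euc d → ℝ)
    (hNs : ∀ v, Ns v = sSup ((fun a => ⟪v, a⟫) '' {a | N a ≤ 1}))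
    (ω : Euc d → ℝ) (hωdiff : Differentiable ℝ ω)
    (α : ℝ) (hα : 0 < α)
    (hsc : ∀ u v, ω v + ⟪gradient ω v, u - v⟫ + α / 2 * N (u - v) ^ 2 ≤ ω u)
    (D : Euc d → Euc d → ℝ)
    (hD : ∀ a b, D a b = ω a - (ω b + ⟪gradient ω b, a - b⟫))
    (U : Set (Euc d)) (hUne : U.Nonempty) (hUcl : IsClosed U) (hUconv : Convex ℝ U)
    (z ξ ζ : Euc d) (γ : ℝ) (hγ : 0 < γ)
    (x zp : Euc d) (hxU : x ∈ U) (hzpU : zp ∈ U)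
    (hxmin : IsMinOn (fun u => γ * ⟪ξ, u⟫ + D u z) U x)
    (hzpmin : IsMinOn (fun u => γ * ⟪ζ, u⟫ + D u z) U zp) :
    ∀ u ∈ U, γ * ⟪ζ, x - u⟫
      ≤ D u z - D u zp + γ ^ 2 / α * Ns (ξ - ζ) ^ 2
        - α / 2 * (N (x - z) ^ 2 + N (x - zp) ^ 2) := by
  have hNzero : N 0 = 0 := by simpa using hNsmul 0 0
  have hNneg : ∀ a, N (-a) = N a := by
    intro a; have := hNsmul (-1) a; simpa using this
  have hN0 : ∀ a, 0 ≤ N a := by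
    intro a
    have h := hNadd a (-a)
    rw [add_neg_cancel, hNzero, hNneg] at h
    linarith
  -- upper bound : N is Lipschitz
  set C : ℝ := ∑ i : Fin d, N (EuclideanSpace.single i (1:ℝ)) with hC
  have hCnn : 0 ≤ C := Finset.sum_nonneg fun i _ => hN0 _
  have hsum : ∀ (s : Finset (Fin d)) (f : Fin d → Euc d),
      N (∑ i ∈ s, f i) ≤ ∑ i ∈ s, N (f i) := by
    intro s f
    induction s using Finset.cons_induction with
    | empty => simp [hNzero]
    | cons i s his ih =>
      rw [Finset.sum_cons, Finset.sum_cons]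
      exact le_trans (hNadd _ _) (by linarith)
  have hupper : ∀ a : Euc d, N a ≤ C * ‖a‖ := by
    intro a
    have hrepr : a = ∑ i : Fin d, a i • EuclideanSpace.single i (1:ℝ) := by
      ext j
      rw [WithLp.ofLp_sum, Finset.sum_apply]
      simp [EuclideanSpace.single_apply]
    calc N a ≤ ∑ i : Fin d, N (a i • EuclideanSpace.single i (1:ℝ)) := by
          nth_rewrite 1 [hrepr]; exact hsum _ _
      _ ≤ ∑ i : Fin d, N (EuclideanSpace.single i (1:ℝ)) * ‖a‖ := by
          refine Finset.sum_le_sum fun i _ => ?_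
          rw [hNsmul, mul_comm]
          have habs : |a i| ≤ ‖a‖ := by
            have h1 : a i = ⟪EuclideanSpace.single i (1:ℝ), a⟫ := by
              simp [EuclideanSpace.inner_single_left]
            have h2 := abs_real_inner_le_norm (EuclideanSpace.single i (1:ℝ)) a
            rw [EuclideanSpace.norm_single] at h2
            rw [h1]; simpa using h2
          exact mul_le_mul_of_nonneg_left habs (hN0 _)
      _ = C * ‖a‖ := by rw [← Finset.sum_mul]
  have hNcont : Continuous N := by
    rw [Metric.continuous_iff]
    intro a ε hε
    refine ⟨ε / (C + 1), by positivity, fun b hb => ?_⟩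
    have hdab : N b ≤ N a + N (b - a) := by
      have := hNadd a (b - a); simpa using this
    have hdba : N a ≤ N b + N (a - b) := by
      have := hNadd b (a - b); simpa using this
    have h1 : N (b - a) ≤ C * ‖b - a‖ := hupper _
    have h2 : N (a - b) ≤ C * ‖a - b‖ := hupper _
    have hnn : ‖b - a‖ = dist b a := by rw [dist_eq_norm]
    have hnn' : ‖a - b‖ = dist b a := by rw [norm_sub_rev, dist_eq_norm]
    rw [hnn] at h1; rw [hnn'] at h2
    have hd : dist b a < ε / (C + 1) := hb
    have hCd : C * dist b a ≤ (C+1) * dist b a := by nlinarith [dist_nonneg (x := b) (y := a)]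
    have : (C+1) * dist b a < ε := by
      rw [mul_comm, ← lt_div_iff₀ (by positivity)]; exact hd
    rw [Real.dist_eq, abs_lt]
    constructor <;> nlinarith
  -- lower bound
  obtain ⟨c, hcpos, hlower⟩ : ∃ c : ℝ, 0 < c ∧ ∀ a : Euc d, c * ‖a‖ ≤ N a := by
    by_cases hex : ∃ a : Euc d, a ≠ 0
    · obtain ⟨a₀, ha₀⟩ := hex
      have hsne : (Metric.sphere (0 : Euc d) 1).Nonempty := by
        refine ⟨‖a₀‖⁻¹ • a₀, ?_⟩
        simp only [Metric.mem_sphere, dist_zero_right]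
        rw [norm_smul, norm_inv, norm_norm, inv_mul_cancel₀ (norm_ne_zero_iff.2 ha₀)]
      obtain ⟨y, hy, hymin⟩ := (isCompact_sphere (0 : Euc d) 1).exists_isMinOn hsne
        hNcont.continuousOn
      have hyn : ‖y‖ = 1 := by simpa [mem_sphere_zero_iff_norm] using hy
      have hy0 : y ≠ 0 := by intro h; rw [h] at hyn; simp at hyn
      have hcp : 0 < N y := lt_of_le_of_ne (hN0 y) fun h => hy0 (hNdef y h.symm)
      refine ⟨N y, hcp, fun a => ?_⟩
      rcases eq_or_ne a 0 with rfl | ha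
      · simp [hNzero]
      · have hu : (‖a‖⁻¹ • a) ∈ Metric.sphere (0 : Euc d) 1 := by
          simp only [Metric.mem_sphere, dist_zero_right]
          rw [norm_smul, norm_inv, norm_norm, inv_mul_cancel₀ (norm_ne_zero_iff.2 ha)]
        have hmin := hymin hu
        have hNa : N a = ‖a‖ * N (‖a‖⁻¹ • a) := by
          have hsm : ‖a‖ • (‖a‖⁻¹ • a) = a := by
            rw [smul_smul, mul_inv_cancel₀ (norm_ne_zero_iff.2 ha), one_smul]
          conv_lhs => rw [← hsm]
          rw [hNsmul, abs_of_nonneg (norm_nonneg a)]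
        rw [hNa]
        have := mul_le_mul_of_nonneg_left hmin (norm_nonneg a)
        simpa [mul_comm] using this
    · push_neg at hex
      exact ⟨1, one_pos, fun a => by simp [hex a, hNzero]⟩
  -- bddAbove of the dual set
  have hbdd : ∀ v : Euc d, BddAbove ((fun a => ⟪v, a⟫) '' {a | N a ≤ 1}) := by
    intro v
    refine ⟨‖v‖ * c⁻¹, fun r hr => ?_⟩
    obtain ⟨a, ha, rfl⟩ := hr
    have h1 : ‖a‖ ≤ c⁻¹ := by
      have := hlower a
      have h2 : c * ‖a‖ ≤ 1 := le_trans this ha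
      rw [← le_div_iff₀' hcpos] at h2
      simpa [one_div] using h2
    calc ⟪v, a⟫ ≤ ‖v‖ * ‖a‖ := real_inner_le_norm v a
      _ ≤ ‖v‖ * c⁻¹ := mul_le_mul_of_nonneg_left h1 (norm_nonneg v)
  have hNs0 : ∀ v, 0 ≤ Ns v := by
    intro v
    rw [hNs]
    refine le_csSup (hbdd v) ?_
    exact ⟨0, by simp [hNzero], by simp⟩
  have hdual : ∀ v a, ⟪v, a⟫ ≤ Ns v * N a := by
    intro v a
    rcases eq_or_ne (N a) 0 with h0 | h0
    · rw [hNdef a h0]; simp [hNzero]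
    · have hpos : 0 < N a := lt_of_le_of_ne (hN0 a) (Ne.symm h0)
      have hb : N ((N a)⁻¹ • a) ≤ 1 := by
        rw [hNsmul, abs_of_nonneg (inv_nonneg.2 (hN0 a)), inv_mul_cancel₀ h0]
      have hmem : ⟪v, (N a)⁻¹ • a⟫ ∈ (fun a => ⟪v, a⟫) '' {a | N a ≤ 1} :=
        ⟨_, hb, rfl⟩
      have hle : ⟪v, (N a)⁻¹ • a⟫ ≤ Ns v := by rw [hNs]; exact le_csSup (hbdd v) hmem
      rw [real_inner_smul_right] at hle
      calc ⟪v, a⟫ = N a * ((N a)⁻¹ * ⟪v, a⟫) := by field_simp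
        _ ≤ N a * Ns v := mul_le_mul_of_nonneg_left hle (hN0 a)
        _ = Ns v * N a := mul_comm _ _

  have foc : ∀ (c p : Euc d), p ∈ U →
      IsMinOn (fun u => γ * ⟪c, u⟫ + D u z) U p →
      ∀ u ∈ U, 0 ≤ γ * ⟪c, u - p⟫ +
        (⟪gradient ω p, u - p⟫ - ⟪gradient ω z, u - p⟫) := by
    intro c p hp hmin u hu
    have hfun : (fun u => γ * ⟪c, u⟫ + D u z)
        = fun u : Euc d => γ * ⟪c, u⟫ + (ω u - (ω z + ⟪gradient ω z, u - z⟫)) := by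
      funext v; rw [hD]
    rw [hfun] at hmin
    have hcone : u - p ∈ posTangentConeAt U p :=
      sub_mem_posTangentConeAt_of_segment_subset (hUconv.segment_subset hp hu)
    have h1 : HasFDerivAt (fun u : Euc d => γ * ⟪c, u⟫) (γ • (innerSL ℝ c)) p :=
      ((innerSL ℝ c).hasFDerivAt).const_mul γ
    have h2 : HasFDerivAt ω ((InnerProductSpace.toDual ℝ (Euc d)) (gradient ω p)) p :=
      ((hωdiff p).hasGradientAt).hasFDerivAt
    have h3 : HasFDerivAt (fun u : Euc d => ω z + ⟪gradient ω z, u - z⟫)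
        (innerSL ℝ (gradient ω z)) p := by
      have h : HasFDerivAt (fun u : Euc d => ⟪gradient ω z, u⟫)
          (innerSL ℝ (gradient ω z)) p := (innerSL ℝ (gradient ω z)).hasFDerivAt
      have h4 := (h.sub_const ⟪gradient ω z, z⟫).const_add (ω z)
      have he : (fun u : Euc d => ω z + ⟪gradient ω z, u - z⟫)
          = fun u : Euc d => ω z + (⟪gradient ω z, u⟫ - ⟪gradient ω z, z⟫) := by
        funext v; rw [inner_sub_right]
      rw [he]; exact h4
    have hF := (h1.add (h2.sub h3)).hasFDerivWithinAt (s := U)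
    have hfin := hmin.localize.hasFDerivWithinAt_nonneg hF hcone
    simpa [ContinuousLinearMap.add_apply, ContinuousLinearMap.sub_apply,
      ContinuousLinearMap.smul_apply, innerSL_apply_apply, InnerProductSpace.toDual_apply_apply,
      smul_eq_mul] using hfin
  have hDlb : ∀ a b, α / 2 * N (a - b) ^ 2 ≤ D a b := by
    intro a b; rw [hD]; linarith [hsc a b]
  have key : ∀ (c p : Euc d), p ∈ U →
      IsMinOn (fun u => γ * ⟪c, u⟫ + D u z) U p →
      ∀ u ∈ U, γ * ⟪c, p - u⟫ ≤ D u z - D u p - D p z := by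
    intro c p hp hmin u hu
    have h := foc c p hp hmin u hu
    simp only [hD, inner_sub_right, mul_sub] at h ⊢
    linarith
  intro u hu
  have key2 := key ξ x hxU hxmin zp hzpU
  have key3 := key ζ zp hzpU hzpmin x hxU
  have key1u := key ζ zp hzpU hzpmin u hu
  set t := N (x - zp) with ht
  have hNrev : N (zp - x) = t := by
    rw [show zp - x = -(x - zp) by abel, hNneg]
  have hd1 : α / 2 * t ^ 2 ≤ D zp x := by
    have := hDlb zp x; rwa [hNrev] at this
  have hd2 : α / 2 * t ^ 2 ≤ D x zp := hDlb x zp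
  have hd3 : α / 2 * N (x - z) ^ 2 ≤ D x z := hDlb x z
  set A : ℝ := ⟪ξ - ζ, zp - x⟫ with hA
  have e1 : A ≤ Ns (ξ - ζ) * t := by
    have := hdual (ξ - ζ) (zp - x); rwa [hNrev] at this
  have hsum2 : γ * ⟪ξ, x - zp⟫ + γ * ⟪ζ, zp - x⟫ = -(γ * A) := by
    have : ⟪ξ, x - zp⟫ + ⟪ζ, zp - x⟫ = -A := by
      simp only [hA, inner_sub_left, inner_sub_right]; ring
    rw [← mul_add, this]; ring
  have h5 : α * t ^ 2 ≤ γ * A := by linarith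
  have hAle : γ * A ≤ γ * (Ns (ξ - ζ) * t) :=
    mul_le_mul_of_nonneg_left e1 hγ.le
  have hK : α * t ^ 2 ≤ γ * (Ns (ξ - ζ) * t) := le_trans h5 hAle
  have hYoung : γ * (Ns (ξ - ζ) * t) ≤ γ ^ 2 / α * Ns (ξ - ζ) ^ 2 := by
    rw [div_mul_eq_mul_div, le_div_iff₀ hα]
    nlinarith [sq_nonneg (γ * Ns (ξ - ζ) - α * t),
      mul_le_mul_of_nonneg_left hK hα.le]
  have heq : γ * ⟪ζ, x - u⟫ = γ * ⟪ξ, x - zp⟫ + γ * A + γ * ⟪ζ, zp - u⟫ := by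
    have : ⟪ζ, x - u⟫ = ⟪ξ, x - zp⟫ + A + ⟪ζ, zp - u⟫ := by
      simp only [hA, inner_sub_left, inner_sub_right]; ring
    rw [this]; ring
  linarith
end

section
/- (Inequality (b3) in the proof of the prox lemma) Under the setting of the general-norm prox lemma—N a norm on ℝ^d with dual norm N*, ω differentiable and α-strongly convex with respect to N, D the induced Bregman distance, U ⊆ ℝ^d nonempty closed convex, z ∈ ℝ^d, γ > 0, and x, z₊ the minimizers over U of u ↦ γ⟨ξ, u⟩ + D(u, z) and u ↦ γ⟨ζ, u⟩ + D(u, z) respectively—one has α·N(z₊ − x)² ≤ γ·N*(ξ − ζ)·N(x − z₊). -/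
open scoped RealInnerProductSpace

set_option maxHeartbeats 1000000 in
/-- Inequality (b3) in the proof of the prox lemma:
`α·N(z₊ − x)² ≤ γ·N*(ξ − ζ)·N(x − z₊)`. -/
theorem prox_lemma_b3 {d : ℕ}
    (N : Euc d → ℝ)
    (hNadd : ∀ a b, N (a + b) ≤ N a + N b)
    (hNsmul : ∀ (r : ℝ) (a : Euc d), N (r • a) = |r| * N a)
    (hNdef : ∀ a, N a = 0 → a = 0)
    (Ns : Euc d → ℝ)
    (hNs : ∀ v, Ns v = sSup ((fun a => ⟪v, a⟫) '' {a | N a ≤ 1}))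
    (ω : Euc d → ℝ) (hωdiff : Differentiable ℝ ω)
    (α : ℝ) (hα : 0 < α)
    (hsc : ∀ u v, ω v + ⟪gradient ω v, u - v⟫ + α / 2 * N (u - v) ^ 2 ≤ ω u)
    (D : Euc d → Euc d → ℝ)
    (hD : ∀ a b, D a b = ω a - (ω b + ⟪gradient ω b, a - b⟫))
    (U : Set (Euc d)) (hUne : U.Nonempty) (hUcl : IsClosed U) (hUconv : Convex ℝ U)
    (z ξ ζ : Euc d) (γ : ℝ) (hγ : 0 < γ)
    (x zp : Euc d) (hxU : x ∈ U) (hzpU : zp ∈ U)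
    (hxmin : IsMinOn (fun u => γ * ⟪ξ, u⟫ + D u z) U x)
    (hzpmin : IsMinOn (fun u => γ * ⟪ζ, u⟫ + D u z) U zp) :
    α * N (zp - x) ^ 2 ≤ γ * Ns (ξ - ζ) * N (x - zp) := by
  have hN0 : N 0 = 0 := by
    have := hNsmul 0 0; simpa using this
  have hNneg : ∀ a, N (-a) = N a := by
    intro a
    have := hNsmul (-1) a; simpa using this
  have hNnonneg : ∀ a, 0 ≤ N a := by
    intro a
    have h1 := hNadd a (-a)
    rw [add_neg_cancel, hN0, hNneg] at h1
    linarith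
  -- key strong-convexity-of-minimizer inequality
  have key : ∀ (v xm : Euc d), xm ∈ U →
      IsMinOn (fun u => γ * ⟪v, u⟫ + D u z) U xm → ∀ u ∈ U,
      γ * ⟪v, xm⟫ + D xm z + α / 2 * N (u - xm) ^ 2 ≤ γ * ⟪v, u⟫ + D u z := by
    intro v xm hxm hmin u hu
    set s := N (u - xm) with hs
    set g := gradient ω z with hg
    have hlim : ∀ t : ℝ, 0 < t → t < 1 →
        γ * ⟪v, xm⟫ + D xm z + α / 2 * (1 - t) * s ^ 2 ≤ γ * ⟪v, u⟫ + D u z := by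
      intro t ht0 ht1
      set w := xm + t • (u - xm) with hw
      have hweq : w = (1 - t) • xm + t • u := by rw [hw]; module
      have hwU : w ∈ U := by
        rw [hweq]
        exact hUconv hxm hu (by linarith) ht0.le (by ring)
      have h1 := hsc u w
      have h2 := hsc xm w
      have e1 : u - w = (1 - t) • (u - xm) := by rw [hw]; module
      have e2 : xm - w = (-t) • (u - xm) := by rw [hw]; module
      have n1 : N (u - w) = (1 - t) * s := by
        rw [e1, hNsmul, abs_of_nonneg (by linarith)]
      have n2 : N (xm - w) = t * s := by
        rw [e2, hNsmul, abs_neg, abs_of_pos ht0]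
      rw [n1] at h1
      rw [n2] at h2
      rw [e1, real_inner_smul_right] at h1
      rw [e2, real_inner_smul_right] at h2
      have hωw : ω w ≤ t * ω u + (1 - t) * ω xm - α / 2 * (t * (1 - t)) * s ^ 2 := by
        nlinarith [mul_le_mul_of_nonneg_left h1 ht0.le,
          mul_le_mul_of_nonneg_left h2 (by linarith : (0:ℝ) ≤ 1 - t)]
      have hminw : γ * ⟪v, xm⟫ + D xm z ≤ γ * ⟪v, w⟫ + D w z := hmin hwU
      have lin1 : γ * ⟪v, w⟫ = (1 - t) * (γ * ⟪v, xm⟫) + t * (γ * ⟪v, u⟫) := by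
        rw [hweq, inner_add_right, real_inner_smul_right, real_inner_smul_right]; ring
      have lin2 : ⟪g, w - z⟫ = (1 - t) * ⟪g, xm - z⟫ + t * ⟪g, u - z⟫ := by
        have hwz : w - z = (1 - t) • (xm - z) + t • (u - z) := by rw [hw]; module
        rw [hwz, inner_add_right, real_inner_smul_right, real_inner_smul_right]
      rw [hD, hD, ← hg]
      rw [hD, hD, ← hg] at hminw
      have hkey : t * (γ * ⟪v, xm⟫ + (ω xm - (ω z + ⟪g, xm - z⟫)) + α / 2 * (1 - t) * s ^ 2)
          ≤ t * (γ * ⟪v, u⟫ + (ω u - (ω z + ⟪g, u - z⟫))) := by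
        nlinarith [hminw, hωw, lin1, lin2]
      exact le_of_mul_le_mul_left hkey ht0
    -- pass to the limit t → 0
    by_contra hcon
    push_neg at hcon
    have hB : 0 ≤ α / 2 * s ^ 2 := by positivity
    set A := γ * ⟪v, u⟫ + D u z - (γ * ⟪v, xm⟫ + D xm z) with hA
    have hA' : A < α / 2 * s ^ 2 := by rw [hA]; linarith
    set B := α / 2 * s ^ 2 with hBdef
    set ε := B - A with hε
    have hεpos : 0 < ε := by rw [hε]; linarith
    set t := min (1/2 : ℝ) (ε / (2 * (B + 1))) with ht
    have ht0 : 0 < t := lt_min (by norm_num) (by positivity)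
    have ht1 : t < 1 := lt_of_le_of_lt (min_le_left _ _) (by norm_num)
    have htB : t * B < ε := by
      have h1 : t * B ≤ ε / (2 * (B + 1)) * B :=
        mul_le_mul_of_nonneg_right (min_le_right _ _) hB
      have h2 : ε / (2 * (B + 1)) * B < ε := by
        rw [div_mul_eq_mul_div, div_lt_iff₀ (by positivity)]
        nlinarith
      linarith
    have hlt := hlim t ht0 ht1
    have hexp : α / 2 * (1 - t) * s ^ 2 = B - t * B := by rw [hBdef]; ring
    have hA2 : A = γ * ⟪v, u⟫ + D u z - (γ * ⟪v, xm⟫ + D xm z) := hA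
    linarith
  have hk1 := key ξ x hxU hxmin zp hzpU
  have hk2 := key ζ zp hzpU hzpmin x hxU
  have hNsym : N (x - zp) = N (zp - x) := by
    rw [← neg_sub zp x, hNneg]
  set c := N (zp - x) with hc
  have hcnn : 0 ≤ c := hNnonneg _
  rcases eq_or_lt_of_le hcnn with hc0 | hcpos
  · -- degenerate case
    rw [hNsym, ← hc0]
    simp
  · -- main case
    have hinner : γ * ⟪ξ - ζ, zp - x⟫ =
        γ * ⟪ξ, zp⟫ - γ * ⟪ξ, x⟫ + γ * ⟪ζ, x⟫ - γ * ⟪ζ, zp⟫ := by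
      rw [inner_sub_left, inner_sub_right, inner_sub_right]; ring
    have hsum : α * c ^ 2 ≤ γ * ⟪ξ - ζ, zp - x⟫ := by
      rw [hNsym] at hk2
      rw [hinner]; linarith
    -- dual norm bound
    have hwne : zp - x ≠ 0 := by
      intro h
      rw [h, hN0] at hc; exact absurd hc (ne_of_gt hcpos)
    -- N dominates a multiple of the euclidean norm
    have hNle : ∀ a b : Euc d, N a ≤ N b + N (a - b) := by
      intro a b
      have := hNadd b (a - b)
      simpa using this
    have hNlip : ∀ a, N a ≤ (∑ i, N (EuclideanSpace.single i (1:ℝ))) * ‖a‖ := by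
      intro a
      have hrepr : a = ∑ i, a i • EuclideanSpace.single i (1:ℝ) := by
        ext j
        have h := map_sum (EuclideanSpace.projₗ (𝕜 := ℝ) j)
            (fun i => a i • EuclideanSpace.single i (1:ℝ)) Finset.univ
        simp only [PiLp.projₗ_apply] at h
        rw [show (∑ i : Fin d, a i • EuclideanSpace.single i (1:ℝ)) j
            = ∑ i : Fin d, (a i • EuclideanSpace.single i (1:ℝ)) j from h]
        simp [PiLp.smul_apply, EuclideanSpace.single_apply]
      have hsub : ∀ (s : Finset (Fin d)) (f : Fin d → Euc d),
          N (∑ i ∈ s, f i) ≤ ∑ i ∈ s, N (f i) := by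
        intro s f
        induction s using Finset.cons_induction with
        | empty => simp [hN0]
        | cons i s his ih =>
          rw [Finset.sum_cons, Finset.sum_cons]
          calc N (f i + ∑ j ∈ s, f j) ≤ N (f i) + N (∑ j ∈ s, f j) := hNadd _ _
            _ ≤ N (f i) + ∑ j ∈ s, N (f j) := by linarith
      calc N a = N (∑ i, a i • EuclideanSpace.single i (1:ℝ)) := by rw [← hrepr]
        _ ≤ ∑ i, N (a i • EuclideanSpace.single i (1:ℝ)) := hsub _ _
        _ = ∑ i, |a i| * N (EuclideanSpace.single i (1:ℝ)) := by
            simp [hNsmul]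
        _ ≤ ∑ i, ‖a‖ * N (EuclideanSpace.single i (1:ℝ)) := by
            apply Finset.sum_le_sum
            intro i _
            apply mul_le_mul_of_nonneg_right _ (hNnonneg _)
            calc |a i| = |⟪EuclideanSpace.single i (1:ℝ), a⟫| := by
                  rw [EuclideanSpace.inner_single_left]; simp
              _ ≤ ‖EuclideanSpace.single i (1:ℝ)‖ * ‖a‖ := abs_real_inner_le_norm _ _
              _ = ‖a‖ := by rw [EuclideanSpace.norm_single]; simp
        _ = (∑ i, N (EuclideanSpace.single i (1:ℝ))) * ‖a‖ := by
            rw [← Finset.mul_sum]; exact mul_comm _ _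
    set L := ∑ i, N (EuclideanSpace.single i (1:ℝ)) with hL
    have hL0 : 0 ≤ L := Finset.sum_nonneg fun i _ => hNnonneg _
    have hcont : Continuous N := by
      have : LipschitzWith L.toNNReal N := by
        apply LipschitzWith.of_dist_le_mul
        intro a b
        rw [Real.dist_eq, dist_eq_norm]
        rw [Real.coe_toNNReal L hL0]
        have h1 : N a - N b ≤ L * ‖a - b‖ := by
          have := hNle a b
          have := hNlip (a - b)
          linarith
        have h2 : N b - N a ≤ L * ‖a - b‖ := by
          have := hNle b a
          have h3 := hNlip (b - a)
          have : ‖b - a‖ = ‖a - b‖ := norm_sub_rev _ _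
          rw [this] at h3
          linarith [hNle b a]
        rw [abs_le]; constructor <;> linarith
      exact this.continuous
    have hSne : (Metric.sphere (0 : Euc d) 1).Nonempty := by
      refine ⟨‖zp - x‖⁻¹ • (zp - x), ?_⟩
      rw [Metric.mem_sphere, dist_zero_right, norm_smul, norm_inv, norm_norm,
        inv_mul_cancel₀ (norm_ne_zero_iff.mpr hwne)]
    obtain ⟨a0, ha0S, ha0min⟩ :=
      (isCompact_sphere (0 : Euc d) 1).exists_isMinOn hSne hcont.continuousOn
    set m := N a0 with hm
    have ha0n : ‖a0‖ = 1 := by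
      simpa [Metric.mem_sphere, dist_zero_right] using ha0S
    have hmpos : 0 < m := by
      rcases lt_or_eq_of_le (hNnonneg a0) with h | h
      · exact h
      · exfalso
        have := hNdef a0 h.symm
        rw [this] at ha0n; simp at ha0n
    have hlow : ∀ a : Euc d, m * ‖a‖ ≤ N a := by
      intro a
      rcases eq_or_ne a 0 with rfl | ha
      · simp [hN0]
      · have hna : ‖a‖ ≠ 0 := norm_ne_zero_iff.mpr ha
        have hmem : ‖a‖⁻¹ • a ∈ Metric.sphere (0 : Euc d) 1 := by
          rw [Metric.mem_sphere, dist_zero_right, norm_smul, norm_inv, norm_norm,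
            inv_mul_cancel₀ hna]
        have h1 : m ≤ N (‖a‖⁻¹ • a) := ha0min hmem
        have h2 : N (‖a‖⁻¹ • a) = ‖a‖⁻¹ * N a := by
          rw [hNsmul, abs_of_nonneg (inv_nonneg.mpr (norm_nonneg _))]
        rw [h2] at h1
        have := mul_le_mul_of_nonneg_left h1 (norm_nonneg a)
        calc m * ‖a‖ = ‖a‖ * m := mul_comm _ _
          _ ≤ ‖a‖ * (‖a‖⁻¹ * N a) := this
          _ = N a := by field_simp
    -- bounded above
    have hbdd : BddAbove ((fun a => ⟪ξ - ζ, a⟫) '' {a | N a ≤ 1}) := by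
      refine ⟨‖ξ - ζ‖ * m⁻¹, ?_⟩
      rintro y ⟨a, ha, rfl⟩
      have hna : ‖a‖ ≤ m⁻¹ := by
        have h1 : m * ‖a‖ ≤ 1 := (hlow a).trans ha
        have h2 : m * m⁻¹ = 1 := mul_inv_cancel₀ (ne_of_gt hmpos)
        nlinarith
      calc ⟪ξ - ζ, a⟫ ≤ ‖ξ - ζ‖ * ‖a‖ := real_inner_le_norm _ _
        _ ≤ ‖ξ - ζ‖ * m⁻¹ := mul_le_mul_of_nonneg_left hna (norm_nonneg _)
    have hmem : N (c⁻¹ • (zp - x)) ≤ 1 := by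
      rw [hNsmul, abs_of_pos (inv_pos.mpr hcpos), ← hc, inv_mul_cancel₀ (ne_of_gt hcpos)]
    have hle : ⟪ξ - ζ, c⁻¹ • (zp - x)⟫ ≤ Ns (ξ - ζ) := by
      rw [hNs]
      exact le_csSup hbdd ⟨_, hmem, rfl⟩
    rw [real_inner_smul_right] at hle
    have hdual : ⟪ξ - ζ, zp - x⟫ ≤ Ns (ξ - ζ) * c := by
      have := mul_le_mul_of_nonneg_left hle hcpos.le
      calc ⟪ξ - ζ, zp - x⟫ = c * (c⁻¹ * ⟪ξ - ζ, zp - x⟫) := by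
            field_simp
        _ ≤ c * Ns (ξ - ζ) := this
        _ = Ns (ξ - ζ) * c := mul_comm _ _
    rw [hNsym]
    calc α * c ^ 2 ≤ γ * ⟪ξ - ζ, zp - x⟫ := hsum
      _ ≤ γ * (Ns (ξ - ζ) * c) := mul_le_mul_of_nonneg_left hdual hγ.le
      _ = γ * Ns (ξ - ζ) * c := by ring
end

section
/- Let T be an even positive integer and f, g ∈ ℝ^d. Define f_t = f for 1 ≤ t ≤ T/2 and f_t = g for T/2 < t ≤ T, and let μ = (1/T)∑_{t=1}^T f_t. Then the total variation equals ∑_{t=1}^T ‖f_t − μ‖₂² = (T/4)‖f − g‖₂², while the sequential variation equals ∑_{t=1}^{T−1} ‖f_{t+1} − f_t‖₂² = ‖f − g‖₂². (Hence the total variation cannot be bounded by a constant multiple of the sequential variation.) -/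
open Finset

/-- For the two-block sequence (`f` for the first half, `g` for the second half),
the total variation equals `(T/4)‖f - g‖²` while the sequential variation equals
`‖f - g‖²`. -/
theorem total_vs_sequential_example {d T : ℕ} (hT : 0 < T) (hTeven : Even T)
    (f g : Euc d) (fs : ℕ → Euc d)
    (hfs1 : ∀ t, 1 ≤ t → t ≤ T / 2 → fs t = f)
    (hfs2 : ∀ t, T / 2 < t → t ≤ T → fs t = g)
    (μ : Euc d) (hμ : μ = ((T : ℝ))⁻¹ • ∑ t ∈ Finset.Icc 1 T, fs t) :
    (∑ t ∈ Finset.Icc 1 T, ‖fs t - μ‖ ^ 2 = (T : ℝ) / 4 * ‖f - g‖ ^ 2) ∧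
      (∑ t ∈ Finset.Icc 1 (T - 1), ‖fs (t + 1) - fs t‖ ^ 2 = ‖f - g‖ ^ 2) := by
  obtain ⟨m, hm⟩ := hTeven
  have hT2 : T / 2 = m := by omega
  have hm1 : 1 ≤ m := by omega
  have hsplit : Finset.Icc 1 T = Finset.Icc 1 m ∪ Finset.Ioc m T := by
    ext t
    simp only [Finset.mem_Icc, Finset.mem_Ioc, Finset.mem_union]
    omega
  have hdisj : Disjoint (Finset.Icc 1 m) (Finset.Ioc m T) := by
    simp only [Finset.disjoint_left, Finset.mem_Icc, Finset.mem_Ioc]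
    omega
  have hf : ∀ t ∈ Finset.Icc 1 m, fs t = f := by
    intro t ht
    simp only [Finset.mem_Icc] at ht
    exact hfs1 t ht.1 (by omega)
  have hg : ∀ t ∈ Finset.Ioc m T, fs t = g := by
    intro t ht
    simp only [Finset.mem_Ioc] at ht
    exact hfs2 t (by omega) ht.2
  -- compute μ
  have hsum : ∑ t ∈ Finset.Icc 1 T, fs t = (m : ℝ) • f + (m : ℝ) • g := by
    rw [hsplit, Finset.sum_union hdisj, Finset.sum_congr rfl hf,
      Finset.sum_congr rfl hg, Finset.sum_const, Finset.sum_const,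
      Nat.card_Icc, Nat.card_Ioc]
    have h1 : m + 1 - 1 = m := by omega
    have h2 : T - m = m := by omega
    rw [h1, h2, ← Nat.cast_smul_eq_nsmul ℝ, ← Nat.cast_smul_eq_nsmul ℝ]
  have hmne : (m : ℝ) ≠ 0 := by positivity
  have hTc : (T : ℝ) = 2 * m := by
    rw [hm]; push_cast; ring
  have hμ' : μ = (2 : ℝ)⁻¹ • (f + g) := by
    have hc : (T : ℝ)⁻¹ * m = 2⁻¹ := by rw [hTc]; field_simp
    rw [hμ, hsum, smul_add, smul_smul, smul_smul, hc, ← smul_add]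
  have hnf : ‖f - μ‖ ^ 2 = ‖f - g‖ ^ 2 / 4 := by
    have : f - μ = (2 : ℝ)⁻¹ • (f - g) := by rw [hμ']; module
    rw [this, norm_smul]
    simp [mul_pow]
    ring
  have hng : ‖g - μ‖ ^ 2 = ‖f - g‖ ^ 2 / 4 := by
    have : g - μ = -((2 : ℝ)⁻¹ • (f - g)) := by rw [hμ']; module
    rw [this, norm_neg, norm_smul]
    simp [mul_pow]
    ring
  constructor
  · have e1 : ∑ t ∈ Finset.Icc 1 m, ‖fs t - μ‖ ^ 2
        = ∑ _t ∈ Finset.Icc 1 m, ‖f - g‖ ^ 2 / 4 :=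
      Finset.sum_congr rfl fun t ht => by rw [hf t ht, hnf]
    have e2 : ∑ t ∈ Finset.Ioc m T, ‖fs t - μ‖ ^ 2
        = ∑ _t ∈ Finset.Ioc m T, ‖f - g‖ ^ 2 / 4 :=
      Finset.sum_congr rfl fun t ht => by rw [hg t ht, hng]
    rw [hsplit, Finset.sum_union hdisj, e1, e2,
      Finset.sum_const, Finset.sum_const, Nat.card_Icc, Nat.card_Ioc]
    have h1 : m + 1 - 1 = m := by omega
    have h2 : T - m = m := by omega
    rw [h1, h2]
    simp only [nsmul_eq_mul]
    rw [hTc]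
    ring
  · rw [Finset.sum_eq_single m]
    · rw [hfs2 (m + 1) (by omega) (by omega), hfs1 m (by omega) (by omega)]
      rw [← norm_neg]
      congr 1
      abel
    · intro t ht hne
      simp only [Finset.mem_Icc] at ht
      rcases lt_or_gt_of_ne hne with h | h
      · rw [hfs1 (t + 1) (by omega) (by omega), hfs1 t (by omega) (by omega)]
        simp
      · rw [hfs2 (t + 1) (by omega) (by omega), hfs2 t (by omega) (by omega)]
        simp
    · intro h
      exfalso
      apply h
      simp only [Finset.mem_Icc]
      omega
end
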